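/- arXiv:1212.5216 — 2 statements merged into one kernel-verified Lean document; each statement's English description precedes it below -/
import Mathlib

section
/- For every k ≥ 1, limsup_{t→∞} |{w ∈ (X∪X⁻¹)^t : w reduces to the identity of F_k}|^{1/t} = 2√(2k−1); that is, the number of words of length t in the letters x₁^{±1},…,x_k^{±1} representing the trivial element of the free group F_k has exponential growth rate exactly 2√(2k−1). -/
open scoped Classical

noncomputable section

namespace Paper

/-! ### Free groups: bases, primitivity, primitivity rank, critical subgroups -/

/-- `S` is a free basis of the subgroup `H` of `G`: the canonical homomorphism from the free
group on `S` to `G` is injective with image `H`. -/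
def IsFreeBasisOf {G : Type*} [Group G] (S : Set G) (H : Subgroup G) : Prop :=
  Function.Injective ⇑(FreeGroup.lift (fun s : S => (s : G))) ∧
    (FreeGroup.lift (fun s : S => (s : G))).range = H

/-- `w` is primitive in `H` if it belongs to some free basis of `H`. -/
def IsPrimitiveIn {G : Type*} [Group G] (w : G) (H : Subgroup G) : Prop :=
  ∃ S : Set G, IsFreeBasisOf S H ∧ w ∈ S

/-- The rank of a subgroup of a free group, as the infimum of the cardinalities of its free
bases (`⊤` if there is no free basis). -/
def subgroupRank {G : Type*} [Group G] (H : Subgroup G) : ℕ∞ :=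
  ⨅ S ∈ {S : Set G | IsFreeBasisOf S H}, S.encard

/-- The primitivity rank `π(w)`: the minimal rank of a subgroup of `G` in which `w` is
not primitive (`⊤`, i.e. `∞`, if `w` is primitive in every subgroup containing it). -/
def primRank {G : Type*} [Group G] (w : G) : ℕ∞ :=
  ⨅ J ∈ {J : Subgroup G | w ∈ J ∧ ¬IsPrimitiveIn w J}, subgroupRank J

/-- The set `Crit w` of `w`-critical subgroups: subgroups attaining the minimum in the
definition of the primitivity rank. -/
def Crit {G : Type*} [Group G] (w : G) : Set (Subgroup G) :=
  {J | w ∈ J ∧ ¬IsPrimitiveIn w J ∧ subgroupRank J = primRank w}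

/-- `H` is a free factor of `J`: some free basis of `H` extends to a free basis of `J`. -/
def IsFreeFactorOf {G : Type*} [Group G] (H J : Subgroup G) : Prop :=
  ∃ S T : Set G, S ⊆ T ∧ IsFreeBasisOf S H ∧ IsFreeBasisOf T J

/-- `J` is an algebraic extension of `H`: `H ≤ J` and no intermediate subgroup
`H ≤ L ⪇ J` is a proper free factor of `J`. -/
def IsAlgebraicExt {G : Type*} [Group G] (H J : Subgroup G) : Prop :=
  H ≤ J ∧ ∀ L : Subgroup G, H ≤ L → IsFreeFactorOf L J → L = J

/-! ### Words in the letters `x₁^{±1},…,x_k^{±1}` -/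

/-- The element of the free group given by a single (possibly inverted) letter. -/
def letter {k : ℕ} (p : Fin k × Bool) : FreeGroup (Fin k) :=
  if p.2 then FreeGroup.of p.1 else (FreeGroup.of p.1)⁻¹

/-- The element of the free group spelled by a (not necessarily reduced) word of length `t`. -/
def wordElem {k t : ℕ} (w : Fin t → Fin k × Bool) : FreeGroup (Fin k) :=
  (List.ofFn fun i => letter (w i)).prod

/-- The permutation `w(σ₁,…,σ_k) = σ_{j₁}^{ε₁}⋯σ_{j_t}^{ε_t}`, composed left to right. -/
def wordPerm {k t : ℕ} (n : ℕ) (w : Fin t → Fin k × Bool)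
    (σ : Fin k → Equiv.Perm (Fin n)) : Equiv.Perm (Fin n) :=
  ((List.ofFn fun i => if (w i).2 then σ (w i).1 else (σ (w i).1)⁻¹).reverse).prod

/-- The number of fixed points of a permutation of `{1,…,n}`. -/
def numFixedPts {n : ℕ} (τ : Equiv.Perm (Fin n)) : ℕ :=
  (Finset.univ.filter fun x => τ x = x).card

/-- `E[F_{w,n}]`: the expected number of fixed points of `w(σ₁,…,σ_k)`, where
`σ₁,…,σ_k` are independent uniformly random permutations of `{1,…,n}`. -/
def EFix (n : ℕ) {k t : ℕ} (w : Fin t → Fin k × Bool) : ℝ :=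
  (∑ σ : Fin k → Equiv.Perm (Fin n), (numFixedPts (wordPerm n w σ) : ℝ)) /
    (Fintype.card (Fin k → Equiv.Perm (Fin n)) : ℝ)

/-- the number of reduced words of length `t` in `F_k` with primitivity rank `m` -/
def ckm (k : ℕ) (m : ℕ∞) (t : ℕ) : ℕ :=
  {w : FreeGroup (Fin k) | (FreeGroup.toWord w).length = t ∧ primRank w = m}.ncard

/-- the number of not-necessarily-reduced words of length `t` with primitivity rank `m` -/
def bkm (k : ℕ) (m : ℕ∞) (t : ℕ) : ℕ :=
  {w : Fin t → Fin k × Bool | primRank (wordElem w) = m}.ncard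

/-- `Σ_{w reduced, |w| = t, π(w) = m} |Crit(w)|` -/
def critSumReduced (k : ℕ) (m : ℕ∞) (t : ℕ) : ℝ :=
  ∑ᶠ w ∈ {w : FreeGroup (Fin k) | (FreeGroup.toWord w).length = t ∧ primRank w = m},
    ((Crit w).ncard : ℝ)

/-- `Σ_{w ∈ (X∪X⁻¹)^t, π(w) = m} |Crit(w)|` -/
def critSumWords (k : ℕ) (m : ℕ∞) (t : ℕ) : ℝ :=
  ∑ᶠ w ∈ {w : Fin t → Fin k × Bool | primRank (wordElem w) = m},
    ((Crit (wordElem w)).ncard : ℝ)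

/-! ### Finite multigraphs with oriented labeled edges -/

/-- A finite multigraph (loops and multiple edges allowed) with `k` edges, each oriented,
labeled by `x₁,…,x_k`; edge `e` goes from `src e` to `tgt e`. -/
structure MultiGraph where
  V : Type
  [fintypeV : Fintype V]
  k : ℕ
  src : Fin k → V
  tgt : Fin k → V

attribute [instance] MultiGraph.fintypeV

namespace MultiGraph

variable (G : MultiGraph)

/-- The initial vertex of a directed step (an edge together with a direction). -/
def stepStart (s : Fin G.k × Bool) : G.V := if s.2 then G.src s.1 else G.tgt s.1

/-- The terminal vertex of a directed step. -/
def stepEnd (s : Fin G.k × Bool) : G.V := if s.2 then G.tgt s.1 else G.src s.1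

def Adjacent (u v : G.V) : Prop :=
  ∃ e : Fin G.k, (G.src e = u ∧ G.tgt e = v) ∨ (G.src e = v ∧ G.tgt e = u)

/-- The graph is connected (and nonempty). -/
def Connected : Prop :=
  Nonempty G.V ∧ ∀ u v : G.V, Relation.ReflTransGen G.Adjacent u v

/-- `IsPathFrom u v l`: the list of directed steps `l` forms a path from `u` to `v`. -/
def IsPathFrom : G.V → G.V → List (Fin G.k × Bool) → Prop
  | u, v, [] => u = v
  | u, v, s :: l => G.stepStart s = u ∧ IsPathFrom (G.stepEnd s) v l

/-- The word in `F_k` spelled by a path. -/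
def pathWord (l : List (Fin G.k × Bool)) : FreeGroup (Fin G.k) :=
  (l.map letter).prod

/-- The permutation `w(σ₁,…,σ_k)` (composed left to right) spelled by a path. -/
def pathPerm {n : ℕ} (l : List (Fin G.k × Bool)) (σ : Fin G.k → Equiv.Perm (Fin n)) :
    Equiv.Perm (Fin n) :=
  ((l.map fun s => if s.2 then σ s.1 else (σ s.1)⁻¹).reverse).prod

/-- `CP t`: closed paths of length `t` in `G` (a basepoint with a path from it to itself). -/
def CP (t : ℕ) : Set (G.V × List (Fin G.k × Bool)) :=
  {p | p.2.length = t ∧ G.IsPathFrom p.1 p.1 p.2}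

/-- `CP⁰_t`: closed paths of length `t` whose word reduces to the identity. -/
def CP0 (t : ℕ) : Set (G.V × List (Fin G.k × Bool)) :=
  {p ∈ G.CP t | G.pathWord p.2 = 1}

/-- `CP^m_t`: closed paths of length `t` whose word has primitivity rank `m`. -/
def CPm (t : ℕ) (m : ℕ∞) : Set (G.V × List (Fin G.k × Bool)) :=
  {p ∈ G.CP t | primRank (G.pathWord p.2) = m}

/-- The degree of a vertex (a loop contributes 2). -/
def deg (v : G.V) : ℕ :=
  ∑ e : Fin G.k, ((if G.src e = v then 1 else 0) + (if G.tgt e = v then 1 else 0))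

/-- The rank of the fundamental group of a connected graph: `|E| − |V| + 1`. -/
def rk : ℕ := G.k + 1 - Fintype.card G.V

/-- The spectral radius of the adjacency operator of the universal covering tree of `G`,
via its combinatorial characterization as the exponential growth rate of the number of
closed paths whose word reduces to the identity. -/
def rhoA : ℝ :=
  Filter.limsup (fun t : ℕ => ((G.CP0 t).ncard : ℝ) ^ (1 / (t : ℝ))) Filter.atTop

/-- The Markov weight of a path: the product of `1/deg` over the vertices it leaves. -/
def pathWeight : List (Fin G.k × Bool) → ℝ
  | [] => 1
  | s :: l => (1 / (G.deg (G.stepStart s) : ℝ)) * pathWeight l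

/-- The spectral radius of the Markov operator of the universal covering tree of `G`,
via its combinatorial characterization. -/
def rhoM : ℝ :=
  Filter.limsup (fun t : ℕ => (∑ᶠ p ∈ G.CP0 t, G.pathWeight p.2) ^ (1 / (t : ℝ)))
    Filter.atTop

/-- The subgroup `J_v ≤ F_k` of words of closed paths at the vertex `v`. -/
def Jv (v : G.V) : Subgroup (FreeGroup (Fin G.k)) :=
  Subgroup.closure {g | ∃ l, G.IsPathFrom v v l ∧ G.pathWord l = g}

/-- The exponential growth rate of `Σ_{w ∈ CP_t^m(G)} |Crit(w)|`. -/
def critSumGrowth (m : ℕ∞) : ℝ :=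
  Filter.limsup (fun t : ℕ =>
    (∑ᶠ p ∈ G.CPm t m, ((Crit (G.pathWord p.2)).ncard : ℝ)) ^ (1 / (t : ℝ))) Filter.atTop

/-- The adjacency matrix of the `n`-covering of `G` determined by the permutations `σ`. -/
def covAdj (n : ℕ) (σ : Fin G.k → Equiv.Perm (Fin n)) :
    Matrix (G.V × Fin n) (G.V × Fin n) ℝ := fun p q =>
  ∑ e : Fin G.k,
    ((if G.src e = p.1 ∧ G.tgt e = q.1 ∧ σ e p.2 = q.2 then (1 : ℝ) else 0) +
      (if G.src e = q.1 ∧ G.tgt e = p.1 ∧ σ e q.2 = p.2 then (1 : ℝ) else 0))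

/-- The Markov operator of the `n`-covering of `G` determined by the permutations `σ`. -/
def covMarkov (n : ℕ) (σ : Fin G.k → Equiv.Perm (Fin n)) :
    Matrix (G.V × Fin n) (G.V × Fin n) ℝ := fun p q =>
  G.covAdj n σ p q / (G.deg p.1 : ℝ)

end MultiGraph

/-! ### Spectral quantities -/

/-- The largest absolute value of a *new* eigenvalue of a symmetric operator on a covering:
the supremum of `|μ|` over eigenvalues `μ` admitting an eigenvector summing to zero on
every fiber `{v} × {1,…,n}`. -/
def lamNew {V : Type*} [Fintype V] {n : ℕ} (A : Matrix (V × Fin n) (V × Fin n) ℝ) : ℝ :=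
  sSup {x : ℝ | ∃ (μ : ℝ) (f : V × Fin n → ℝ), x = |μ| ∧ f ≠ 0 ∧
    (∀ v : V, ∑ i : Fin n, f (v, i) = 0) ∧ A.mulVec f = μ • f}

/-- The largest absolute value of a *non-trivial* eigenvalue of a symmetric matrix:
the supremum of `|μ|` over eigenvalues `μ` admitting an eigenvector whose coordinates
sum to zero. -/
def lam0 {N : Type*} [Fintype N] (A : Matrix N N ℝ) : ℝ :=
  sSup {x : ℝ | ∃ (μ : ℝ) (f : N → ℝ), x = |μ| ∧ f ≠ 0 ∧
    (∑ i : N, f i = 0) ∧ A.mulVec f = μ • f}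

end Paper

namespace Paper


/-! ### Auxiliary material for Statement 10 -/

/-- Number of walks of length `t` from a vertex at distance `m` to the root in the
`2k`-regular tree. -/
def Aw (k : ℕ) : ℕ → ℕ → ℕ
  | 0, m => if m = 0 then 1 else 0
  | t+1, 0 => 2 * k * Aw k t 1
  | t+1, m+1 => Aw k t m + (2*k - 1) * Aw k t (m+2)

lemma wordElem_cons {k t : ℕ} (a : Fin k × Bool) (w : Fin t → Fin k × Bool) :
    wordElem (Fin.cons a w) = letter a * wordElem w := by
  simp [wordElem, List.ofFn_succ, Fin.cons_succ]

lemma letter_eq_mk {k : ℕ} (p : Fin k × Bool) : letter p = FreeGroup.mk [p] := by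
  obtain ⟨i, b⟩ := p
  cases b <;> simp [letter, FreeGroup.of, FreeGroup.inv_mk, FreeGroup.invRev]

lemma letter_inv {k : ℕ} (p : Fin k × Bool) : (letter p)⁻¹ = letter (p.1, !p.2) := by
  obtain ⟨i, b⟩ := p; cases b <;> simp [letter]

lemma toWord_letter_mul {k : ℕ} (p : Fin k × Bool) (g : FreeGroup (Fin k)) :
    (letter p * g).toWord = FreeGroup.reduce (p :: g.toWord) := by
  conv_lhs => rw [letter_eq_mk, ← FreeGroup.mk_toWord (x := g), FreeGroup.mul_mk]
  rw [FreeGroup.toWord_mk]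
  rfl

lemma sum_Aw_letter (k t : ℕ) (g : FreeGroup (Fin k)) :
    ∑ a : Fin k × Bool, Aw k t (((letter a)⁻¹ * g).toWord.length)
      = Aw k (t+1) g.toWord.length := by
  have hred : FreeGroup.reduce g.toWord = g.toWord := FreeGroup.reduce_toWord g
  rcases hL : g.toWord with _ | ⟨⟨i₀, b₀⟩, tl⟩
  · have : ∀ a : Fin k × Bool, ((letter a)⁻¹ * g).toWord.length = 1 := by
      intro a
      rw [letter_inv, toWord_letter_mul, hL]
      rfl
    simp only [this, Finset.sum_const, Finset.card_univ, Fintype.card_prod,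
      Fintype.card_fin, Fintype.card_bool, smul_eq_mul]
    show k * 2 * Aw k t 1 = 2 * k * Aw k t 1
    ring
  · have hred' : FreeGroup.reduce ((i₀, b₀) :: tl) = (i₀, b₀) :: tl := by rw [← hL]; exact hred
    have hv : ∀ a : Fin k × Bool, ((letter a)⁻¹ * g).toWord.length =
        if a = (i₀, b₀) then tl.length else tl.length + 2 := by
      intro a
      rw [letter_inv, toWord_letter_mul, hL, FreeGroup.reduce.cons, hred']
      by_cases h : a = (i₀, b₀)
      · subst h
        simp
      · have h' : ¬ (a.1 = i₀ ∧ (!a.2) = !b₀) := by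
          intro ⟨h1, h2⟩
          exact h (Prod.ext h1 (Bool.not_inj h2))
        simp only [if_neg h', if_neg h]
        simp
    simp only [hv]
    rw [show ((i₀,b₀)::tl).length = tl.length + 1 from rfl]
    simp only [apply_ite (Aw k t)]
    conv_rhs => rw [show Aw k (t+1) (tl.length+1)
      = Aw k t tl.length + (2*k-1) * Aw k t (tl.length+2) from rfl]
    rw [← Finset.add_sum_erase Finset.univ _ (Finset.mem_univ (i₀, b₀))]
    rw [if_pos rfl]
    congr 1
    rw [Finset.sum_congr rfl (fun x hx => if_neg (Finset.ne_of_mem_erase hx)),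
      Finset.sum_const, smul_eq_mul]
    congr 1
    rw [Finset.card_erase_of_mem (Finset.mem_univ _), Finset.card_univ]
    have : Fintype.card (Fin k × Bool) = 2 * k := by simp [mul_comm]
    omega

lemma count_succ (k t : ℕ) (g : FreeGroup (Fin k)) :
    (Finset.univ.filter fun w : Fin (t+1) → Fin k × Bool => wordElem w = g).card
      = ∑ a : Fin k × Bool,
          (Finset.univ.filter fun w : Fin t → Fin k × Bool =>
            wordElem w = (letter a)⁻¹ * g).card := by
  rw [Finset.card_eq_sum_card_fiberwise
    (f := fun w : Fin (t+1) → Fin k × Bool => w 0) (t := Finset.univ)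
    (fun x _ => Finset.mem_univ _)]
  refine Finset.sum_congr rfl fun a _ => ?_
  refine Finset.card_bij' (fun w _ => Fin.tail w) (fun w' _ => Fin.cons a w') ?_ ?_ ?_ ?_
  · intro w hw
    simp only [Finset.mem_filter, Finset.mem_univ, true_and] at hw ⊢
    obtain ⟨hwg, hw0⟩ := hw
    have : wordElem w = letter a * wordElem (Fin.tail w) := by
      conv_lhs => rw [← Fin.cons_self_tail w, wordElem_cons, hw0]
    rw [← hwg, this, inv_mul_cancel_left]
  · intro w' hw'
    simp only [Finset.mem_filter, Finset.mem_univ, true_and] at hw' ⊢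
    constructor
    · rw [wordElem_cons, hw', mul_inv_cancel_left]
    · simp
  · intro w hw
    simp only [Finset.mem_filter, Finset.mem_univ, true_and] at hw
    obtain ⟨h1, h2⟩ := hw
    subst h2
    exact Fin.cons_self_tail w
  · intro w' _
    simp

lemma count_eq (k t : ℕ) (g : FreeGroup (Fin k)) :
    (Finset.univ.filter fun w : Fin t → Fin k × Bool => wordElem w = g).card
      = Aw k t g.toWord.length := by
  induction t generalizing g with
  | zero =>
    by_cases hg : g = 1
    · subst hg
      have h1 : Aw k 0 (FreeGroup.toWord (1 : FreeGroup (Fin k))).length = 1 := by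
        rw [FreeGroup.toWord_one]
        rfl
      rw [h1, Finset.card_eq_one]
      refine ⟨(default : Fin 0 → Fin k × Bool), ?_⟩
      ext w
      simp only [Finset.mem_filter, Finset.mem_univ, true_and, Finset.mem_singleton]
      constructor
      · intro _; exact Subsingleton.elim _ _
      · intro h; subst h; simp [wordElem]
    · have hlen : g.toWord.length ≠ 0 := by
        intro h
        exact hg (FreeGroup.toWord_eq_nil_iff.mp (List.length_eq_zero_iff.mp h))
      rw [show Aw k 0 g.toWord.length = 0 from by simp [Aw, hlen]]
      rw [Finset.card_eq_zero]
      ext w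
      simp only [Finset.mem_filter, Finset.mem_univ, true_and, Finset.notMem_empty, iff_false]
      intro h
      apply hg
      rw [← h]
      simp [wordElem]
  | succ t ih =>
    rw [count_succ, Finset.sum_congr rfl (fun a _ => ih _), sum_Aw_letter]

lemma Aw_lower (k : ℕ) : ∀ t m j, t = m + 2*j →
    (2*k - 1)^j * (Nat.choose t (m+j) - Nat.choose t (m+j+1)) ≤ Aw k t m := by
  intro t
  induction t with
  | zero =>
    intro m j h
    have hm : m = 0 := by omega
    have hj : j = 0 := by omega
    subst hm; subst hj
    simp [Aw]
  | succ t ih =>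
    intro m j h
    match m, j with
    | 0, j =>
      have hj : 1 ≤ j := by omega
      obtain ⟨j', rfl⟩ : ∃ j', j = j' + 1 := ⟨j - 1, by omega⟩
      have ht : t = 1 + 2 * j' := by omega
      have ih1 := ih 1 j' ht
      show _ ≤ 2 * k * Aw k t 1
      have key : (t+1).choose (0+(j'+1)) - (t+1).choose (0+(j'+1)+1)
          = t.choose (1+j') - t.choose (1+j'+1) := by
        simp only [Nat.zero_add]
        rw [Nat.choose_succ_succ' t j', Nat.choose_succ_succ' t (j'+1)]
        have hsymm : t.choose j' = t.choose (j'+1) := by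
          have h2 : t - (j'+1) = j' := by omega
          rw [← Nat.choose_symm (by omega : j'+1 ≤ t), h2]
        have h1 : 1 + j' = j' + 1 := by omega
        rw [h1]
        omega
      rw [key]
      calc (2*k-1)^(j'+1) * (t.choose (1+j') - t.choose (1+j'+1))
          = (2*k-1) * ((2*k-1)^j' * (t.choose (1+j') - t.choose (1+j'+1))) := by ring
        _ ≤ (2*k-1) * Aw k t 1 := Nat.mul_le_mul_left _ ih1
        _ ≤ 2 * k * Aw k t 1 := Nat.mul_le_mul_right _ (by omega)
    | m+1, 0 =>
      show _ ≤ Aw k t m + (2*k-1) * Aw k t (m+2)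
      have ih1 := ih m 0 (by omega)
      have h1 : (t+1).choose (m+1+0) = 1 := by
        rw [show m+1+0 = t+1 from by omega]; exact Nat.choose_self _
      have h2 : (t+1).choose (m+1+0+1) = 0 := Nat.choose_eq_zero_of_lt (by omega)
      have h3 : t.choose (m+0) = 1 := by
        rw [show m+0 = t from by omega]; exact Nat.choose_self _
      have h4 : t.choose (m+0+1) = 0 := Nat.choose_eq_zero_of_lt (by omega)
      rw [h1, h2]
      rw [h3, h4] at ih1
      simp only [pow_zero, Nat.one_mul, Nat.sub_zero] at ih1 ⊢
      omega
    | m+1, j'+1 =>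
      have ih1 := ih m (j'+1) (by omega)
      have ih2 := ih (m+2) j' (by omega)
      show _ ≤ Aw k t m + (2*k-1) * Aw k t (m+2)
      rw [show m+1+(j'+1) = (m+(j'+1))+1 from by omega,
          show (m+(j'+1))+1+1 = (m+(j'+1)+1)+1 from by omega,
          Nat.choose_succ_succ t (m+(j'+1)), Nat.choose_succ_succ t (m+(j'+1)+1)]
      rw [show m+2+j' = m+(j'+1)+1 from by omega,
          show m+(j'+1)+1+1 = m+(j'+1)+1+1 from rfl] at ih2
      have hsplit : (t.choose (m+(j'+1)) + t.choose (m+(j'+1)+1))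
            - (t.choose (m+(j'+1)+1) + t.choose (m+(j'+1)+1+1))
          ≤ (t.choose (m+(j'+1)) - t.choose (m+(j'+1)+1))
            + (t.choose (m+(j'+1)+1) - t.choose (m+(j'+1)+1+1)) := by omega
      calc (2*k-1)^(j'+1) * ((t.choose (m+(j'+1)) + t.choose (m+(j'+1)+1))
            - (t.choose (m+(j'+1)+1) + t.choose (m+(j'+1)+1+1)))
          ≤ (2*k-1)^(j'+1) * ((t.choose (m+(j'+1)) - t.choose (m+(j'+1)+1))
            + (t.choose (m+(j'+1)+1) - t.choose (m+(j'+1)+1+1))) :=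
            Nat.mul_le_mul_left _ hsplit
        _ = (2*k-1)^(j'+1) * (t.choose (m+(j'+1)) - t.choose (m+(j'+1)+1))
            + (2*k-1) * ((2*k-1)^j' * (t.choose (m+(j'+1)+1) - t.choose (m+(j'+1)+1+1))) := by
            rw [pow_succ]; ring
        _ ≤ Aw k t m + (2*k-1) * Aw k t (m+2) :=
            Nat.add_le_add ih1 (Nat.mul_le_mul_left _ ih2)

lemma Aw_low_final (k n : ℕ) :
    4^n * (2*k-1)^n ≤ ((n+1)*(2*n+1)) * Aw k (2*n) 0 := by
  have h1 := Aw_lower k (2*n) 0 n (by ring)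
  simp only [Nat.zero_add] at h1
  have e := Nat.choose_succ_right_eq (2*n) n
  rw [show 2*n - n = n from by omega] at e
  set c0 := (2*n).choose n with hc0
  set c1 := (2*n).choose (n+1) with hc1
  have h2 : (n+1) * (c0 - c1) = c0 := by
    have hc0n : c0 * n ≤ c0 * (n+1) := Nat.mul_le_mul_left _ (by omega)
    have hle : c1 ≤ c0 := Nat.le_of_mul_le_mul_right (by omega) (by omega : 0 < n+1)
    rw [Nat.mul_sub, mul_comm (n+1) c1, e, Nat.succ_mul, mul_comm c0 n,
      Nat.add_sub_cancel_left]
  have h3 : 4^n ≤ (2*n+1) * c0 := Nat.four_pow_le_two_mul_add_one_mul_central_binom n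
  calc 4^n * (2*k-1)^n ≤ ((2*n+1) * c0) * (2*k-1)^n := Nat.mul_le_mul_right _ h3
    _ = (2*n+1) * ((n+1) * ((2*k-1)^n * (c0 - c1))) := by
        conv_lhs => rw [← h2]
        ring
    _ ≤ (2*n+1) * ((n+1) * Aw k (2*n) 0) := by
        exact Nat.mul_le_mul_left _ (Nat.mul_le_mul_left _ h1)
    _ = ((n+1)*(2*n+1)) * Aw k (2*n) 0 := by ring

lemma Aw_upper {k : ℕ} (hk : 2 ≤ k) : ∀ t m,
    (Aw k t m : ℝ) * (Real.sqrt (2*(k:ℝ)-1))^m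
      ≤ (2 * Real.sqrt (2*(k:ℝ)-1))^t * (m+2) := by
  set β := Real.sqrt (2*(k:ℝ)-1) with hβ
  have hk' : (2:ℝ) ≤ (k:ℝ) := by exact_mod_cast hk
  have h2k : (3:ℝ) ≤ 2*(k:ℝ)-1 := by linarith
  have hβsq : β^2 = 2*(k:ℝ)-1 := Real.sq_sqrt (by linarith)
  have hβpos : 0 < β := Real.sqrt_pos.mpr (by linarith)
  intro t
  induction t with
  | zero =>
    intro m
    match m with
    | 0 => simp [Aw]
    | m+1 =>
      rw [show Aw k 0 (m+1) = 0 from by simp [Aw]]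
      simp only [Nat.cast_zero, zero_mul, pow_zero, one_mul]
      positivity
  | succ t ih =>
    intro m
    have hρt : (0:ℝ) ≤ (2*β)^t := by positivity
    match m with
    | 0 =>
      rw [show Aw k (t+1) 0 = 2*k*Aw k t 1 from rfl]
      push_cast
      rw [pow_zero, mul_one, pow_succ]
      have ih1 := ih 1
      push_cast at ih1
      rw [pow_one] at ih1
      have hA1 : (0:ℝ) ≤ (Aw k t 1 : ℝ) := Nat.cast_nonneg _
      have h6k : 2*(k:ℝ)*3 ≤ 4*β^2 := by rw [hβsq]; linarith
      have c1 : (2*(k:ℝ)*(Aw k t 1:ℝ))*β^2 ≤ (2*(k:ℝ))*(((2*β)^t*(1+2))*β) := by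
        have h1 := mul_le_mul_of_nonneg_right ih1 hβpos.le
        have h2 := mul_le_mul_of_nonneg_left h1 (by positivity : (0:ℝ) ≤ 2*(k:ℝ))
        calc (2*(k:ℝ)*(Aw k t 1:ℝ))*β^2 = 2*(k:ℝ)*(((Aw k t 1:ℝ)*β)*β) := by ring
          _ ≤ _ := h2
      have c2 : (2*(k:ℝ))*(((2*β)^t*(1+2))*β) ≤ (4*β^2)*((2*β)^t*β) := by
        have h0 : (0:ℝ) ≤ (2*β)^t*β := by positivity
        calc (2*(k:ℝ))*(((2*β)^t*(1+2))*β) = (2*(k:ℝ)*3)*((2*β)^t*β) := by ring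
          _ ≤ (4*β^2)*((2*β)^t*β) := mul_le_mul_of_nonneg_right h6k h0
      have c3 : (2*(k:ℝ)*(Aw k t 1:ℝ))*β^2 ≤ ((2*β)^t*(2*β)*(0+2))*β^2 := by
        calc _ ≤ (4*β^2)*((2*β)^t*β) := c1.trans c2
          _ = ((2*β)^t*(2*β)*(0+2))*β^2 := by ring
      have := le_of_mul_le_mul_right c3 (by positivity : (0:ℝ) < β^2)
      linarith [this]
    | m+1 =>
      rw [show Aw k (t+1) (m+1) = Aw k t m + (2*k-1) * Aw k t (m+2) from rfl]
      have ih1 := ih m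
      have ih2 := ih (m+2)
      have hc : ((2*k-1 : ℕ) : ℝ) = β^2 := by
        rw [hβsq]; push_cast [Nat.cast_sub (by omega : 1 ≤ 2*k)]; ring
      push_cast [hc]
      push_cast at ih1 ih2
      have e1 : ((Aw k t m : ℝ) + β^2 * (Aw k t (m+2):ℝ)) * β^(m+1)
          = ((Aw k t m : ℝ) * β^m) * β + ((Aw k t (m+2):ℝ) * β^(m+2)) * β := by
        ring
      rw [e1]
      have b1 : ((Aw k t m : ℝ) * β^m) * β ≤ ((2*β)^t * (m+2)) * β :=
        mul_le_mul_of_nonneg_right ih1 hβpos.le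
      have b2 : ((Aw k t (m+2):ℝ) * β^(m+2)) * β ≤ ((2*β)^t * ((m+2)+2)) * β :=
        mul_le_mul_of_nonneg_right ih2 hβpos.le
      have e2 : ((2*β)^t * ((m:ℝ)+2)) * β + ((2*β)^t * ((m:ℝ)+2+2)) * β
          = (2*β)^(t+1) * (((m:ℝ)+1)+2) := by rw [pow_succ]; ring
      linarith [b1, b2, e2]

open Filter in
lemma limsup_eq_of_bounds (a : ℕ → ℝ) (ρ : ℝ) (hρ : 1 ≤ ρ)
    (ha0 : ∀ t, 0 ≤ a t)
    (hup : ∀ t, a t ≤ 2 * ρ^t)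
    (hlow : ∀ n, 1 ≤ n → ρ^(2*n) / ((n+1)*(2*n+1)) ≤ a (2*n)) :
    Filter.limsup (fun t : ℕ => (a t) ^ (1 / (t:ℝ))) Filter.atTop = ρ := by
  set u : ℕ → ℝ := fun t => (a t) ^ (1 / (t:ℝ)) with hu
  have hρ0 : (0:ℝ) < ρ := by linarith
  have hub : ∀ t : ℕ, 1 ≤ t → u t ≤ (2:ℝ) ^ (1/(t:ℝ)) * ρ := by
    intro t ht
    have htR : (0:ℝ) < (t:ℝ) := by exact_mod_cast ht
    have h1 : u t ≤ (2 * ρ^t) ^ (1/(t:ℝ)) :=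
      Real.rpow_le_rpow (ha0 t) (hup t) (by positivity)
    have h2 : (2 * ρ^t : ℝ) ^ (1/(t:ℝ)) = (2:ℝ)^(1/(t:ℝ)) * ρ := by
      rw [Real.mul_rpow (by norm_num) (by positivity)]
      congr 1
      rw [← Real.rpow_natCast ρ t, ← Real.rpow_mul hρ0.le]
      rw [mul_one_div, div_self (ne_of_gt htR), Real.rpow_one]
    rw [h2] at h1
    exact h1
  have hb2 : ∀ t : ℕ, u t ≤ 2*ρ + 1 := by
    intro t
    rcases Nat.eq_zero_or_pos t with h0 | h1
    · subst h0
      have : u 0 = 1 := by simp [hu]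
      rw [this]; linarith
    · have := hub t h1
      have h22 : (2:ℝ)^(1/(t:ℝ)) ≤ 2 := by
        calc (2:ℝ)^(1/(t:ℝ)) ≤ (2:ℝ)^(1:ℝ) := by
              apply Real.rpow_le_rpow_of_exponent_le (by norm_num)
              rw [div_le_one (by exact_mod_cast h1)]
              exact_mod_cast h1
          _ = 2 := Real.rpow_one 2
      have : u t ≤ 2 * ρ := le_trans this (by nlinarith)
      linarith
  have hu0 : ∀ t, 0 ≤ u t := fun t => Real.rpow_nonneg (ha0 t) _
  have hbdd : IsBoundedUnder (· ≤ ·) atTop u :=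
    Filter.isBoundedUnder_of ⟨2*ρ+1, hb2⟩
  have hupper : Filter.limsup u atTop ≤ ρ := by
    have hv : Tendsto (fun t : ℕ => (2:ℝ)^(1/(t:ℝ)) * ρ) atTop (nhds ρ) := by
      have h1 : Tendsto (fun t : ℕ => 1/(t:ℝ)) atTop (nhds 0) :=
        tendsto_one_div_atTop_nhds_zero_nat
      have h2 : ContinuousAt (fun x : ℝ => (2:ℝ)^x) 0 :=
        Real.continuousAt_const_rpow (by norm_num)
      have h3 : Tendsto (fun t : ℕ => (2:ℝ)^(1/(t:ℝ))) atTop (nhds ((2:ℝ)^(0:ℝ))) :=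
        h2.tendsto.comp h1
      rw [Real.rpow_zero] at h3
      simpa using h3.mul_const ρ
    calc Filter.limsup u atTop
        ≤ Filter.limsup (fun t : ℕ => (2:ℝ)^(1/(t:ℝ)) * ρ) atTop := by
          apply Filter.limsup_le_limsup
          · filter_upwards [eventually_ge_atTop 1] with t ht using hub t ht
          · exact isCoboundedUnder_le_of_le atTop hu0
          · exact hv.isBoundedUnder_le
      _ = ρ := hv.limsup_eq
  have hlower : ρ ≤ Filter.limsup u atTop := by
    set z : ℕ → ℝ := fun n => (((n:ℝ)+1)*(2*(n:ℝ)+1)) ^ (1/(2*(n:ℝ))) with hzdef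
    set w : ℕ → ℝ := fun n => ((3:ℝ)*n) ^ (1/((3:ℝ)*(n:ℝ))) with hwdef
    have hz1 : ∀ n : ℕ, 1 ≤ n → 1 ≤ z n := by
      intro n hn
      have hnR : (1:ℝ) ≤ (n:ℝ) := by exact_mod_cast hn
      have h := Real.rpow_le_rpow (by norm_num : (0:ℝ) ≤ 1)
        (by nlinarith : (1:ℝ) ≤ ((n:ℝ)+1)*(2*(n:ℝ)+1))
        (by positivity : (0:ℝ) ≤ 1/(2*(n:ℝ)))
      rw [Real.one_rpow] at h
      exact h
    have hzw : ∀ n : ℕ, 1 ≤ n → z n ≤ (w n)^(3:ℕ) := by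
      intro n hn
      have hnR : (1:ℝ) ≤ (n:ℝ) := by exact_mod_cast hn
      have hn0 : (n:ℝ) ≠ 0 := by linarith
      have e1 : (w n)^(3:ℕ) = (((3:ℝ)*n)*((3:ℝ)*n)) ^ (1/(2*(n:ℝ))) := by
        rw [hwdef]
        rw [← Real.rpow_natCast (((3:ℝ)*(n:ℝ)) ^ (1/((3:ℝ)*(n:ℝ)))) 3,
          ← Real.rpow_mul (by positivity)]
        rw [show ((3:ℝ)*n)*((3:ℝ)*n) = ((3:ℝ)*n)^(2:ℕ) from by ring,
          ← Real.rpow_natCast ((3:ℝ)*(n:ℝ)) 2, ← Real.rpow_mul (by positivity)]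
        congr 1
        push_cast
        field_simp
      rw [e1]
      exact Real.rpow_le_rpow (by positivity) (by nlinarith) (by positivity)
    have hcomp : Tendsto (fun n : ℕ => (3:ℝ)*n) atTop atTop :=
      (tendsto_natCast_atTop_atTop).const_mul_atTop (by norm_num)
    have hw : Tendsto w atTop (nhds 1) := tendsto_rpow_div.comp hcomp
    have hw3 : Tendsto (fun n => (w n)^(3:ℕ)) atTop (nhds 1) := by
      have := hw.pow 3
      simpa using this
    have hz : Tendsto z atTop (nhds 1) :=
      tendsto_of_tendsto_of_tendsto_of_le_of_le' tendsto_const_nhds hw3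
        (by filter_upwards [eventually_ge_atTop 1] with n hn using hz1 n hn)
        (by filter_upwards [eventually_ge_atTop 1] with n hn using hzw n hn)
    have hL : Tendsto (fun n : ℕ => ρ / z n) atTop (nhds ρ) := by
      have := (tendsto_const_nhds :
        Tendsto (fun _ : ℕ => ρ) atTop (nhds ρ)).div hz one_ne_zero
      rw [div_one] at this
      exact this
    have hkey : ∀ n : ℕ, 1 ≤ n → ρ / z n ≤ u (2*n) := by
      intro n hn
      have hnR : (1:ℝ) ≤ (n:ℝ) := by exact_mod_cast hn
      have hD : (0:ℝ) < ((n:ℝ)+1)*(2*(n:ℝ)+1) := by nlinarith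
      have hcast : ((2*n : ℕ) : ℝ) = 2*(n:ℝ) := by push_cast; ring
      have h1 : ρ^(2*n) / (((n:ℝ)+1)*(2*(n:ℝ)+1)) ≤ a (2*n) := hlow n hn
      have h2 : (ρ^(2*n) / (((n:ℝ)+1)*(2*(n:ℝ)+1))) ^ (1/((2*n : ℕ):ℝ)) ≤ u (2*n) :=
        Real.rpow_le_rpow (by positivity) h1 (by positivity)
      have h3 : (ρ^(2*n) / (((n:ℝ)+1)*(2*(n:ℝ)+1))) ^ (1/((2*n : ℕ):ℝ)) = ρ / z n := by
        rw [Real.div_rpow (by positivity) hD.le, hcast]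
        congr 1
        rw [← Real.rpow_natCast ρ (2*n), ← Real.rpow_mul hρ0.le, hcast,
          mul_one_div, div_self (by positivity : (2*(n:ℝ)) ≠ 0), Real.rpow_one]
      rw [h3] at h2
      exact h2
    refine le_of_forall_pos_le_add ?_
    intro ε hε
    have hev : ∀ᶠ n in atTop, ρ - ε ≤ ρ / z n := by
      have : ∀ᶠ n in atTop, ρ - ε < ρ / z n :=
        hL.eventually (eventually_gt_nhds (by linarith))
      filter_upwards [this] with n h using h.le
    have hfreq : ∃ᶠ t in atTop, ρ - ε ≤ u t := by
      have h2n : Tendsto (fun n : ℕ => 2*n) atTop atTop :=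
        tendsto_atTop_atTop_of_monotone (fun _ _ h => by omega) (fun b => ⟨b, by omega⟩)
      apply h2n.frequently
      apply Filter.Eventually.frequently
      filter_upwards [hev, eventually_ge_atTop 1] with n h1 h2 using
        le_trans h1 (hkey n h2)
    have := Filter.le_limsup_of_frequently_le hfreq hbdd
    linarith
  linarith [hupper, hlower]


/-- For every `k ≥ 1`, the number of words of length `t` in the letters
`x₁^{±1},…,x_k^{±1}` representing the trivial element of `F_k` has exponential growth rate
exactly `2√(2k−1)`. -/
theorem stmt_10 (k : ℕ) (hk : 1 ≤ k) :
    Filter.limsup (fun t : ℕ =>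
        (({w : Fin t → Fin k × Bool | wordElem w = 1}).ncard : ℝ) ^ (1 / (t : ℝ)))
      Filter.atTop = 2 * Real.sqrt (2 * (k : ℝ) - 1) := by
  classical
  have hk1 : (1:ℝ) ≤ (k:ℝ) := by exact_mod_cast hk
  have h2k1 : (1:ℝ) ≤ 2*(k:ℝ)-1 := by linarith
  have hβnn : (0:ℝ) ≤ Real.sqrt (2*(k:ℝ)-1) := Real.sqrt_nonneg _
  have hβsq : (Real.sqrt (2*(k:ℝ)-1))^2 = 2*(k:ℝ)-1 := Real.sq_sqrt (by linarith)
  have hβ1 : 1 ≤ Real.sqrt (2*(k:ℝ)-1) := by nlinarith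
  have hncard : ∀ t : ℕ, (({w : Fin t → Fin k × Bool | wordElem w = 1}).ncard : ℝ)
      = (Aw k t 0 : ℝ) := by
    intro t
    have hset : {w : Fin t → Fin k × Bool | wordElem w = 1}
        = ↑(Finset.univ.filter fun w : Fin t → Fin k × Bool => wordElem w = 1) := by
      ext w; simp
    rw [hset, Set.ncard_coe_finset, count_eq]
    rw [show (FreeGroup.toWord (1 : FreeGroup (Fin k))).length = 0 from by
      rw [FreeGroup.toWord_one]; rfl]
  have hgoal := limsup_eq_of_bounds
    (fun t : ℕ => (({w : Fin t → Fin k × Bool | wordElem w = 1}).ncard : ℝ))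
    (2 * Real.sqrt (2*(k:ℝ)-1)) (by linarith) (fun t => by positivity) ?_ ?_
  · exact hgoal
  · -- upper bound
    intro t
    rw [hncard t]
    rcases eq_or_lt_of_le hk with h1 | h2
    · -- k = 1
      have hk1' : k = 1 := h1.symm
      subst hk1'
      have hcardle : Aw 1 t 0 ≤ 2^t := by
        have hc := (count_eq 1 t 1).symm
        rw [show (FreeGroup.toWord (1 : FreeGroup (Fin 1))).length = 0 from by
          rw [FreeGroup.toWord_one]; rfl] at hc
        rw [hc]
        calc (Finset.univ.filter fun w : Fin t → Fin 1 × Bool => wordElem w = 1).card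
            ≤ Finset.univ.card := Finset.card_filter_le _ _
          _ = 2^t := by rw [Finset.card_univ]; simp
      have hρ2 : 2 * Real.sqrt (2*((1:ℕ):ℝ)-1) = 2 := by
        norm_num
      rw [hρ2]
      have : (Aw 1 t 0 : ℝ) ≤ (2:ℝ)^t := by exact_mod_cast hcardle
      have h2t : (0:ℝ) ≤ (2:ℝ)^t := by positivity
      linarith
    · -- k ≥ 2
      have hk2 : 2 ≤ k := h2
      have h := Aw_upper hk2 t 0
      simp only [pow_zero, mul_one, Nat.cast_zero, zero_add] at h
      linarith
  · -- lower bound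
    intro n hn
    rw [hncard (2*n)]
    have hnat := Aw_low_final k n
    have hnR : (1:ℝ) ≤ (n:ℝ) := by exact_mod_cast hn
    have hD : (0:ℝ) < ((n:ℝ)+1)*(2*(n:ℝ)+1) := by nlinarith
    rw [div_le_iff₀ hD]
    have hcast : ((4^n * (2*k-1)^n : ℕ) : ℝ) = (2 * Real.sqrt (2*(k:ℝ)-1))^(2*n) := by
      push_cast [Nat.cast_sub (show 1 ≤ 2*k by omega)]
      rw [pow_mul]
      rw [show (2 * Real.sqrt (2*(k:ℝ)-1))^2 = 4*(2*(k:ℝ)-1) from by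
        rw [mul_pow, hβsq]; ring]
      rw [mul_pow]
    calc (2 * Real.sqrt (2*(k:ℝ)-1))^(2*n)
        = ((4^n * (2*k-1)^n : ℕ) : ℝ) := hcast.symm
      _ ≤ (((n+1)*(2*n+1) * Aw k (2*n) 0 : ℕ) : ℝ) := by exact_mod_cast hnat
      _ = (Aw k (2*n) 0 : ℝ) * (((n:ℝ)+1)*(2*(n:ℝ)+1)) := by push_cast; ring

end Paper
end
end

section
/- Let Ω be a finite connected graph with k edges oriented and labeled x₁,…,x_k. Then for every closed path w of length t in Ω, the primitivity rank of the corresponding element of F_k satisfies π(w) ∈ {0, 1, …, rk(Ω)} ∪ {∞}, where rk(Ω) = |E(Ω)| − |V(Ω)| + 1 is the rank of the fundamental group of Ω. -/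
open scoped Classical

noncomputable section

namespace Paper

/-! ### Auxiliary lemmas -/

section AuxFree

open FreeGroup

universe u

variable {α : Type u} {β : Type u}

theorem aux_freeGroup_map_injective {α β : Type u} {f : α → β} (hf : Function.Injective f) :
    Function.Injective (FreeGroup.map f : FreeGroup α →* FreeGroup β) := by
  rcases isEmpty_or_nonempty α with h | h
  · intro x y _
    have h1 : ∀ z : FreeGroup α, z = 1 := by
      intro z
      induction z using FreeGroup.induction_on with
      | C1 => rfl
      | of a => exact h.elim a
      | inv_of a _ => exact h.elim a
      | mul x y hx hy => rw [hx, hy, one_mul]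
    rw [h1 x, h1 y]
  · obtain ⟨g, hg⟩ := hf.hasLeftInverse
    intro x y hxy
    have := congrArg (FreeGroup.map g) hxy
    rwa [FreeGroup.map.comp, FreeGroup.map.comp,
      show g ∘ f = id from funext hg, FreeGroup.map.id, FreeGroup.map.id] at this

theorem aux_map_equiv_surjective (j : α ≃ β) :
    Function.Surjective (FreeGroup.map (⇑j) : FreeGroup α →* FreeGroup β) := by
  intro x
  refine ⟨FreeGroup.map (⇑j.symm) x, ?_⟩
  rw [FreeGroup.map.comp, show ⇑j ∘ ⇑j.symm = id from funext j.apply_symm_apply,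
    FreeGroup.map.id]

theorem aux_inj_of_comp {A B C : Sort*} {f : A → B} {g : B → C}
    (hgf : Function.Injective (g ∘ f)) (hf : Function.Surjective f) :
    Function.Injective g := by
  intro x y hxy
  obtain ⟨x', rfl⟩ := hf x
  obtain ⟨y', rfl⟩ := hf y
  exact congrArg f (hgf hxy)

end AuxFree

section Schreier

universe u

variable {α : Type u} (J : Subgroup (FreeGroup α))

private abbrev SchK (J : Subgroup (FreeGroup α)) : Type u := FreeGroup ((FreeGroup α ⧸ J) × α)

/-- The permutation action on fiber functions. -/
noncomputable def schAut : Equiv.Perm (FreeGroup α ⧸ J) →* MulAut ((FreeGroup α ⧸ J) → SchK J) where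
  toFun π :=
    { toFun := fun f => f ∘ ⇑π.symm
      invFun := fun f => f ∘ ⇑π
      left_inv := fun f => by funext c; simp
      right_inv := fun f => by funext c; simp
      map_mul' := fun f g => rfl }
  map_one' := by
    apply MulEquiv.ext; intro f; funext c; simp; rfl
  map_mul' := fun π₁ π₂ => by
    apply MulEquiv.ext; intro f; funext c
    simp [Equiv.Perm.mul_def, Equiv.symm_trans_apply]

private abbrev SchW (J : Subgroup (FreeGroup α)) :=
  ((FreeGroup α ⧸ J) → SchK J) ⋊[schAut J] Equiv.Perm (FreeGroup α ⧸ J)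

/-- The scanning homomorphism. -/
noncomputable def schPhi : FreeGroup α →* SchW J :=
  FreeGroup.lift fun a =>
    ⟨fun c => FreeGroup.of (c, a),
     MulAction.toPermHom (FreeGroup α) (FreeGroup α ⧸ J) (FreeGroup.of a)⟩

lemma schPhi_right (g : FreeGroup α) :
    (schPhi J g).right = MulAction.toPermHom (FreeGroup α) (FreeGroup α ⧸ J) g := by
  have h : SemidirectProduct.rightHom.comp (schPhi J)
      = MulAction.toPermHom (FreeGroup α) (FreeGroup α ⧸ J) :=
    FreeGroup.ext_hom _ _ fun a => by simp [schPhi, SemidirectProduct.rightHom]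
  exact DFunLike.congr_fun h g

lemma schPhi_of_left (a : α) (c : FreeGroup α ⧸ J) :
    (schPhi J (FreeGroup.of a)).left c = FreeGroup.of (c, a) := by
  simp [schPhi]

lemma schPhi_mul_left (g h : FreeGroup α) (c : FreeGroup α ⧸ J) :
    (schPhi J (g * h)).left c = (schPhi J g).left c * (schPhi J h).left (g⁻¹ • c) := by
  rw [_root_.map_mul, SemidirectProduct.mul_left]
  have h1 : ((schAut J) (schPhi J g).right (schPhi J h).left) c
      = (schPhi J h).left ((schPhi J g).right.symm c) := rfl
  rw [Pi.mul_apply, h1, schPhi_right]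
  rfl

lemma schPhi_inv_left (g : FreeGroup α) (c : FreeGroup α ⧸ J) :
    (schPhi J g⁻¹).left c = ((schPhi J g).left (g • c))⁻¹ := by
  have h := schPhi_mul_left J g⁻¹ g c
  rw [inv_mul_cancel, _root_.map_one, inv_inv] at h
  have h0 : (1 : SchW J).left c = 1 := rfl
  rw [h0] at h
  exact eq_inv_of_mul_eq_one_left h.symm

/-- single letters -/
def schL (a : α) (b : Bool) : FreeGroup α := if b then FreeGroup.of a else (FreeGroup.of a)⁻¹

def schReach (J : Subgroup (FreeGroup α)) : ℕ → Set (FreeGroup α ⧸ J)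
  | 0 => {QuotientGroup.mk 1}
  | n + 1 => {c | ∃ c' ∈ schReach J n, c = c' ∨ ∃ (a : α) (b : Bool), c = (schL a b)⁻¹ • c'}

lemma schReach_exists (c : FreeGroup α ⧸ J) : ∃ n, c ∈ schReach J n := by
  have key : ∀ g : FreeGroup α, ∀ c : FreeGroup α ⧸ J,
      (∃ n, c ∈ schReach J n) → ∃ n, g • c ∈ schReach J n := by
    intro g
    induction g using FreeGroup.induction_on with
    | C1 => intro c hc; simpa using hc
    | of a =>
      rintro c ⟨n, hn⟩
      refine ⟨n + 1, ?_⟩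
      rw [schReach]
      refine ⟨c, hn, Or.inr ⟨a, false, ?_⟩⟩
      show pure a • c = (schL a false)⁻¹ • c
      simp only [schL, Bool.false_eq_true, if_false, inv_inv]
      rfl
    | inv_of a _ =>
      rintro c ⟨n, hn⟩
      refine ⟨n + 1, ?_⟩
      rw [schReach]
      refine ⟨c, hn, Or.inr ⟨a, true, ?_⟩⟩
      show (pure a : FreeGroup α)⁻¹ • c = (schL a true)⁻¹ • c
      simp only [schL, if_true]
      rfl
    | mul x y hx hy => intro c hc; rw [mul_smul]; exact hx _ (hy _ hc)
  obtain ⟨g, rfl⟩ := QuotientGroup.mk_surjective c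
  have hg : (QuotientGroup.mk g : FreeGroup α ⧸ J) = g • QuotientGroup.mk 1 := by
    rw [MulAction.Quotient.smul_mk, smul_eq_mul, mul_one]
  rw [hg]
  exact key g _ ⟨0, by rw [schReach]; exact rfl⟩

noncomputable def schDist (c : FreeGroup α ⧸ J) : ℕ := Nat.find (schReach_exists J c)

lemma schExists_pred (c : FreeGroup α ⧸ J) (h : c ≠ QuotientGroup.mk 1) :
    ∃ x : (FreeGroup α ⧸ J) × α × Bool,
      c = (schL x.2.1 x.2.2)⁻¹ • x.1 ∧ schDist J x.1 < schDist J c := by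
  have hc : c ∈ schReach J (schDist J c) := Nat.find_spec (schReach_exists J c)
  rcases h0 : schDist J c with _ | m
  · rw [h0, schReach] at hc
    exact absurd hc h
  · rw [h0, schReach] at hc
    obtain ⟨c', hc', hcase⟩ := hc
    rcases hcase with rfl | ⟨a, b, rfl⟩
    · have hm : m < schDist J c := by omega
      exact absurd hc' (Nat.find_min (schReach_exists J c) hm)
    · refine ⟨(c', a, b), rfl, ?_⟩
      exact lt_of_le_of_lt (Nat.find_le hc') (by omega)

noncomputable def schRep (c : FreeGroup α ⧸ J) : FreeGroup α :=
  if h : c = QuotientGroup.mk 1 then 1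
  else
    schRep (schExists_pred J c h).choose.1 *
      schL (schExists_pred J c h).choose.2.1 (schExists_pred J c h).choose.2.2
termination_by schDist J c
decreasing_by exact (schExists_pred J c h).choose_spec.2

lemma schRep_base : schRep J (QuotientGroup.mk 1) = 1 := by
  rw [schRep]; simp

lemma schRep_step (c : FreeGroup α ⧸ J) (h : c ≠ QuotientGroup.mk 1) :
    schRep J c = schRep J (schExists_pred J c h).choose.1 *
      schL (schExists_pred J c h).choose.2.1 (schExists_pred J c h).choose.2.2 := by
  rw [schRep]; simp [h]

lemma schRep_mk : ∀ c : FreeGroup α ⧸ J,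
    (QuotientGroup.mk (schRep J c)⁻¹ : FreeGroup α ⧸ J) = c := by
  suffices H : ∀ n (c : FreeGroup α ⧸ J), schDist J c = n →
      (QuotientGroup.mk (schRep J c)⁻¹ : FreeGroup α ⧸ J) = c by
    exact fun c => H _ c rfl
  intro n
  induction n using Nat.strong_induction_on with
  | _ n ih =>
    intro c hn
    by_cases h : c = QuotientGroup.mk 1
    · subst h; rw [schRep_base]; simp
    · obtain ⟨hc, hlt⟩ := (schExists_pred J c h).choose_spec
      set p := (schExists_pred J c h).choose with hp
      have e1 : (QuotientGroup.mk (schRep J p.1 * schL p.2.1 p.2.2)⁻¹ : FreeGroup α ⧸ J)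
          = (schL p.2.1 p.2.2)⁻¹ • QuotientGroup.mk (schRep J p.1)⁻¹ := by
        rw [MulAction.Quotient.smul_mk, smul_eq_mul, mul_inv_rev]
      rw [schRep_step J c h, ← hp, e1, ih (schDist J p.1) (hn ▸ hlt) _ rfl]
      exact hc.symm

lemma sch_smul_mk_one {g : FreeGroup α} (hg : g ∈ J) :
    g • (QuotientGroup.mk 1 : FreeGroup α ⧸ J) = QuotientGroup.mk 1 := by
  rw [MulAction.Quotient.smul_mk, smul_eq_mul, mul_one]
  exact QuotientGroup.eq.mpr (by simpa using inv_mem hg)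

/-- The Schreier generators. -/
noncomputable def schY (c : FreeGroup α ⧸ J) (a : α) : FreeGroup α :=
  schRep J c * FreeGroup.of a * (schRep J ((FreeGroup.of a)⁻¹ • c))⁻¹

lemma schY_mem (c : FreeGroup α ⧸ J) (a : α) : schY J c a ∈ J := by
  have h1 := schRep_mk J c
  have h2 := schRep_mk J ((FreeGroup.of a)⁻¹ • c)
  have h3 : (QuotientGroup.mk (FreeGroup.of a * (schRep J ((FreeGroup.of a)⁻¹ • c))⁻¹)
      : FreeGroup α ⧸ J) = QuotientGroup.mk (schRep J c)⁻¹ := by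
    have := congrArg (fun x => FreeGroup.of a • x) h2
    simp only [MulAction.Quotient.smul_mk, smul_eq_mul] at this ⊢
    rw [this, smul_inv_smul, h1]
  have h4 := QuotientGroup.eq.mp h3.symm
  rw [inv_inv] at h4
  have h5 : schRep J c * (FreeGroup.of a * (schRep J ((FreeGroup.of a)⁻¹ • c))⁻¹)
      = schY J c a := by rw [schY]; group
  rwa [h5] at h4

noncomputable def schSigma : ↥J →* SchK J where
  toFun j := (schPhi J (j : FreeGroup α)).left (QuotientGroup.mk 1)
  map_one' := by
    show (schPhi J ((1 : ↥J) : FreeGroup α)).left (QuotientGroup.mk 1) = 1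
    rw [OneMemClass.coe_one, _root_.map_one]
    rfl
  map_mul' j j' := by
    show (schPhi J ((j * j' : ↥J) : FreeGroup α)).left (QuotientGroup.mk 1) = _
    rw [MulMemClass.coe_mul, schPhi_mul_left, sch_smul_mk_one J (inv_mem j.2)]

noncomputable def schQ : SchK J →* SchK J :=
  FreeGroup.lift fun p => if schY J p.1 p.2 = 1 then 1 else FreeGroup.of p

noncomputable def schDelta (c : FreeGroup α ⧸ J) : SchK J :=
  (schPhi J (schRep J c)).left (QuotientGroup.mk 1)

lemma schRep_smul_self (c : FreeGroup α ⧸ J) :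
    schRep J c • c = (QuotientGroup.mk 1 : FreeGroup α ⧸ J) := by
  calc schRep J c • c
      = schRep J c • (QuotientGroup.mk (schRep J c)⁻¹ : FreeGroup α ⧸ J) := by
        rw [schRep_mk]
    _ = QuotientGroup.mk (schRep J c * (schRep J c)⁻¹) := by
        rw [MulAction.Quotient.smul_mk, smul_eq_mul]
    _ = QuotientGroup.mk 1 := by rw [mul_inv_cancel]

lemma schRep_inv_smul_one (c : FreeGroup α ⧸ J) :
    (schRep J c)⁻¹ • (QuotientGroup.mk 1 : FreeGroup α ⧸ J) = c := by
  rw [MulAction.Quotient.smul_mk, smul_eq_mul, mul_one, schRep_mk]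

lemma schQ_delta : ∀ c : FreeGroup α ⧸ J, schQ J (schDelta J c) = 1 := by
  suffices H : ∀ n (c : FreeGroup α ⧸ J), schDist J c = n → schQ J (schDelta J c) = 1 by
    exact fun c => H _ c rfl
  intro n
  induction n using Nat.strong_induction_on with
  | _ n ih =>
    intro c hn
    by_cases h : c = QuotientGroup.mk 1
    · subst h
      rw [schDelta, schRep_base, _root_.map_one]
      show schQ J 1 = 1
      rw [_root_.map_one]
    · obtain ⟨hc, hlt⟩ := (schExists_pred J c h).choose_spec
      set p := (schExists_pred J c h).choose with hp
      have e1 : schDelta J c = schDelta J p.1 *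
          (schPhi J (schL p.2.1 p.2.2)).left ((schRep J p.1)⁻¹ • QuotientGroup.mk 1) := by
        rw [schDelta, schRep_step J c h, ← hp, schPhi_mul_left]
        rfl
      rw [e1, schRep_inv_smul_one, _root_.map_mul, ih (schDist J p.1) (hn ▸ hlt) _ rfl, one_mul]
      have hrep : schRep J c = schRep J p.1 * schL p.2.1 p.2.2 := by
        rw [schRep_step J c h, ← hp]
      rcases hb : p.2.2 with _ | _
      · -- b = false : ℓ = (of a)⁻¹
        rw [hb] at hc hrep
        have hL : schL p.2.1 false = (FreeGroup.of p.2.1)⁻¹ := by rw [schL]; simp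
        rw [hL] at hc hrep ⊢
        rw [schPhi_inv_left, schPhi_of_left, _root_.map_inv]
        have hcc : FreeGroup.of p.2.1 • p.1 = c := by
          rw [hc, inv_inv]
        have hy : schY J (FreeGroup.of p.2.1 • p.1) p.2.1 = 1 := by
          rw [schY, inv_smul_smul, hcc, hrep]
          group
        show ((FreeGroup.lift _) (FreeGroup.of (FreeGroup.of p.2.1 • p.1, p.2.1)))⁻¹ = 1
        rw [FreeGroup.lift_apply_of, if_pos hy, inv_one]
      · -- b = true : ℓ = of a
        rw [hb] at hc hrep
        have hL : schL p.2.1 true = FreeGroup.of p.2.1 := by rw [schL]; simp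
        rw [hL] at hc hrep ⊢
        rw [schPhi_of_left]
        have hy : schY J p.1 p.2.1 = 1 := by
          rw [schY, show (FreeGroup.of p.2.1)⁻¹ • p.1 = c from hc.symm, hrep]
          group
        show (FreeGroup.lift _) (FreeGroup.of (p.1, p.2.1)) = 1
        rw [FreeGroup.lift_apply_of, if_pos hy]

lemma schSigma_y (c : FreeGroup α ⧸ J) (a : α) :
    schSigma J ⟨schY J c a, schY_mem J c a⟩ =
      schDelta J c * FreeGroup.of (c, a) * (schDelta J ((FreeGroup.of a)⁻¹ • c))⁻¹ := by
  have h0 : schSigma J ⟨schY J c a, schY_mem J c a⟩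
      = (schPhi J (schRep J c * (FreeGroup.of a * (schRep J ((FreeGroup.of a)⁻¹ • c))⁻¹))).left
        (QuotientGroup.mk 1) := by
    rw [schSigma]
    show (schPhi J (schY J c a)).left _ = _
    rw [schY, mul_assoc]
  rw [h0, schPhi_mul_left, schRep_inv_smul_one, schPhi_mul_left, schPhi_inv_left,
    schRep_smul_self, schPhi_of_left]
  rw [schDelta, schDelta, mul_assoc]

lemma schQSigma_y (c : FreeGroup α ⧸ J) (a : α) (h : schY J c a ≠ 1) :
    schQ J (schSigma J ⟨schY J c a, schY_mem J c a⟩) = FreeGroup.of (c, a) := by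
  rw [schSigma_y, _root_.map_mul, _root_.map_mul, _root_.map_inv, schQ_delta, schQ_delta,
    one_mul, inv_one, mul_one]
  show (FreeGroup.lift _) (FreeGroup.of (c, a)) = _
  rw [FreeGroup.lift_apply_of, if_neg h]

theorem schreier_primitive (a : α) (ha : FreeGroup.of a ∈ J) :
    IsPrimitiveIn (FreeGroup.of a) J := by
  classical
  set S : Set (FreeGroup α) := {g | g ≠ 1 ∧ ∃ c a', g = schY J c a'} with hSdef
  have hya : schY J (QuotientGroup.mk 1) a = FreeGroup.of a := by
    rw [schY, sch_smul_mk_one J (inv_mem ha), schRep_base]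
    group
  have haS : FreeGroup.of a ∈ S := ⟨FreeGroup.of_ne_one a, QuotientGroup.mk 1, a, hya.symm⟩
  have hSJ : ∀ s : FreeGroup α, s ∈ S → s ∈ J := by
    rintro s ⟨-, c, a', rfl⟩; exact schY_mem J c a'
  have hgen : ∀ (g : FreeGroup α) (c : FreeGroup α ⧸ J),
      schRep J c * g * (schRep J (g⁻¹ • c))⁻¹ ∈ Subgroup.closure S := by
    intro g
    induction g using FreeGroup.induction_on with
    | C1 =>
      intro c
      simpa using one_mem _
    | of a' =>
      intro c
      have he : schRep J c * FreeGroup.of a' * (schRep J ((FreeGroup.of a' : FreeGroup α)⁻¹ • c))⁻¹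
          = schY J c a' := rfl
      rw [he]
      by_cases h1 : schY J c a' = 1
      · rw [h1]; exact one_mem _
      · exact Subgroup.subset_closure ⟨h1, c, a', rfl⟩
    | inv_of a' _ =>
      intro c
      have he : schRep J c * (FreeGroup.of a' : FreeGroup α)⁻¹ * (schRep J (((FreeGroup.of a' : FreeGroup α)⁻¹)⁻¹ • c))⁻¹
          = (schY J ((FreeGroup.of a') • c) a')⁻¹ := by
        rw [schY, inv_smul_smul, inv_inv]
        show schRep J c * (FreeGroup.of a')⁻¹ * (schRep J (FreeGroup.of a' • c))⁻¹ = _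
        group
      rw [he]
      by_cases h1 : schY J ((FreeGroup.of a') • c) a' = 1
      · rw [h1]; simpa using one_mem _
      · exact inv_mem (Subgroup.subset_closure ⟨h1, _, a', rfl⟩)
    | mul x y hx hy =>
      intro c
      have he : schRep J c * (x * y) * (schRep J ((x * y)⁻¹ • c))⁻¹
          = (schRep J c * x * (schRep J (x⁻¹ • c))⁻¹) *
            (schRep J (x⁻¹ • c) * y * (schRep J (y⁻¹ • (x⁻¹ • c)))⁻¹) := by
        rw [mul_inv_rev, mul_smul]
        group
      rw [he]
      exact mul_mem (hx c) (hy (x⁻¹ • c))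
  have hclos : Subgroup.closure S = J := by
    apply le_antisymm
    · exact (Subgroup.closure_le J).mpr hSJ
    · intro j hj
      have h := hgen j (QuotientGroup.mk 1)
      rw [sch_smul_mk_one J (inv_mem hj), schRep_base] at h
      simpa using h
  have hpc : ∀ s : ↥S, ∃ p : (FreeGroup α ⧸ J) × α, (s : FreeGroup α) = schY J p.1 p.2 := by
    rintro ⟨s, -, c, a', rfl⟩; exact ⟨(c, a'), rfl⟩
  set pc : ↥S → (FreeGroup α ⧸ J) × α := fun s => (hpc s).choose with hpcdef
  have hpc' : ∀ s : ↥S, (s : FreeGroup α) = schY J (pc s).1 (pc s).2 := fun s => (hpc s).choose_spec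
  set L' : FreeGroup ↥S →* ↥J :=
    FreeGroup.lift (fun s : ↥S => (⟨(s : FreeGroup α), hSJ s s.2⟩ : ↥J)) with hL'def
  have hcomp : (schQ J).comp ((schSigma J).comp L')
      = FreeGroup.lift (fun s : ↥S => FreeGroup.of (pc s)) := by
    apply FreeGroup.ext_hom
    intro s
    simp only [MonoidHom.comp_apply, hL'def, FreeGroup.lift_apply_of]
    have h1 : (⟨(s : FreeGroup α), hSJ s s.2⟩ : ↥J)
        = ⟨schY J (pc s).1 (pc s).2, schY_mem J _ _⟩ := Subtype.ext (hpc' s)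
    rw [h1, schQSigma_y J _ _ (by rw [← hpc' s]; exact s.2.1)]
  have hpcinj : Function.Injective pc := by
    intro s t hst
    apply Subtype.ext
    rw [hpc' s, hpc' t, hst]
  have hRinj : Function.Injective ⇑(FreeGroup.lift (fun s : ↥S => FreeGroup.of (pc s))) := by
    have he : ⇑(FreeGroup.lift (fun s : ↥S => FreeGroup.of (pc s)))
        = ⇑(FreeGroup.map pc) := by
      funext x
      rw [FreeGroup.map_eq_lift]
      rfl
    rw [he]
    exact aux_freeGroup_map_injective hpcinj
  have hL'inj : Function.Injective ⇑L' := by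
    intro x y hxy
    apply hRinj
    have := congrArg (fun z => (schQ J) ((schSigma J) z)) hxy
    simpa only [← MonoidHom.comp_apply, hcomp] using this
  refine ⟨S, ⟨?_, ?_⟩, haS⟩
  · have hL : (FreeGroup.lift fun s : ↥S => (s : FreeGroup α)) = (J.subtype).comp L' :=
      FreeGroup.ext_hom _ _ (fun s => by simp [hL'def])
    rw [hL, MonoidHom.coe_comp]
    exact (Subgroup.subtype_injective J).comp hL'inj
  · rw [FreeGroup.range_lift_eq_closure, Subtype.range_coe, hclos]

end Schreier

section Transport

universe u

theorem aux_isFreeBasisOf_closure {G : Type u} [Group G] {S : Set G} {H : Subgroup G}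
    (h : IsFreeBasisOf S H) : Subgroup.closure S = H := by
  rw [← h.2, FreeGroup.range_lift_eq_closure, Subtype.range_coe]

theorem aux_isFreeBasisOf_map {G G' : Type u} [Group G] [Group G'] (e : G ≃* G')
    {S : Set G} {H : Subgroup G} (h : IsFreeBasisOf S H) :
    IsFreeBasisOf (⇑e '' S) (H.map e.toMonoidHom) := by
  have hj : ∀ s : ↥S, (⇑e) (s : G) ∈ ⇑e '' S := fun s => ⟨s, s.2, rfl⟩
  set j : ↥S ≃ ↥(⇑e '' S) := Equiv.Set.image (⇑e) S e.injective with hjdef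
  have hcomm : (FreeGroup.lift (fun t : ↥(⇑e '' S) => (t : G'))).comp (FreeGroup.map ⇑j)
      = (e.toMonoidHom).comp (FreeGroup.lift (fun s : ↥S => (s : G))) := by
    apply FreeGroup.ext_hom
    intro s
    simp [hjdef, Equiv.Set.image, Equiv.Set.imageOfInjOn]
  have hsurj : Function.Surjective ⇑(FreeGroup.map ⇑j : FreeGroup ↥S →* FreeGroup ↥(⇑e '' S)) :=
    aux_map_equiv_surjective j
  constructor
  · apply aux_inj_of_comp (f := ⇑(FreeGroup.map ⇑j)) _ hsurj
    have : ⇑(FreeGroup.lift (fun t : ↥(⇑e '' S) => (t : G'))) ∘ ⇑(FreeGroup.map ⇑j)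
        = ⇑((e.toMonoidHom).comp (FreeGroup.lift (fun s : ↥S => (s : G)))) := by
      rw [← hcomm]; rfl
    rw [this]
    exact e.injective.comp h.1
  · have h1 : (FreeGroup.lift (fun t : ↥(⇑e '' S) => (t : G'))).range
        = ((FreeGroup.lift (fun t : ↥(⇑e '' S) => (t : G'))).comp (FreeGroup.map ⇑j)).range := by
      rw [MonoidHom.range_comp]
      have : (FreeGroup.map ⇑j : FreeGroup ↥S →* FreeGroup ↥(⇑e '' S)).range = ⊤ :=
        MonoidHom.range_eq_top.mpr hsurj
      rw [this, ← MonoidHom.range_eq_map]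
    rw [h1, hcomm, MonoidHom.range_comp, h.2]

/-- A free basis gives an isomorphism with the subgroup. -/
noncomputable def auxBasisEquiv {G : Type u} [Group G] {S : Set G} {H : Subgroup G}
    (h : IsFreeBasisOf S H) : FreeGroup ↥S ≃* ↥H :=
  MulEquiv.ofBijective
    ((FreeGroup.lift (fun s : ↥S => (s : G))).codRestrict H
      (fun x => by
        have : (FreeGroup.lift (fun s : ↥S => (s : G))) x ∈
            (FreeGroup.lift (fun s : ↥S => (s : G))).range := ⟨x, rfl⟩
        rwa [h.2] at this))
    ⟨fun x y hxy => h.1 (congrArg Subtype.val hxy),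
     fun y => by
      have : (y : G) ∈ (FreeGroup.lift (fun s : ↥S => (s : G))).range := by rw [h.2]; exact y.2
      obtain ⟨x, hx⟩ := this
      exact ⟨x, Subtype.ext hx⟩⟩

theorem auxBasisEquiv_of {G : Type u} [Group G] {S : Set G} {H : Subgroup G}
    (h : IsFreeBasisOf S H) (s : ↥S) :
    ((auxBasisEquiv h (FreeGroup.of s) : ↥H) : G) = (s : G) := by
  show (FreeGroup.lift (fun s : ↥S => (s : G))) (FreeGroup.of s) = _
  rw [FreeGroup.lift_apply_of]

/-- An element of a free basis of the whole group is primitive in every subgroup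
containing it. -/
theorem aux_prim_everywhere {α : Type u} {T : Set (FreeGroup α)}
    (hT : IsFreeBasisOf T (⊤ : Subgroup (FreeGroup α))) {u : FreeGroup α} (hu : u ∈ T)
    (J : Subgroup (FreeGroup α)) (huJ : u ∈ J) : IsPrimitiveIn u J := by
  have hsurj : Function.Surjective ⇑(FreeGroup.lift (fun t : ↥T => (t : FreeGroup α))) := by
    intro x
    have : x ∈ (FreeGroup.lift (fun t : ↥T => (t : FreeGroup α))).range := by
      rw [hT.2]; trivial
    exact this
  set e : FreeGroup ↥T ≃* FreeGroup α :=
    MulEquiv.ofBijective (FreeGroup.lift (fun t : ↥T => (t : FreeGroup α))) ⟨hT.1, hsurj⟩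
    with hedef
  have he_of : ∀ t : ↥T, e (FreeGroup.of t) = (t : FreeGroup α) := fun t => by
    simp [hedef]
    exact FreeGroup.lift_apply_of
  set J' : Subgroup (FreeGroup ↥T) := J.comap e.toMonoidHom with hJ'def
  have huJ' : FreeGroup.of (⟨u, hu⟩ : ↥T) ∈ J' := by
    show e (FreeGroup.of ⟨u, hu⟩) ∈ J
    rw [he_of]; exact huJ
  obtain ⟨S', hS'basis, hS'mem⟩ := schreier_primitive J' (⟨u, hu⟩ : ↥T) huJ'
  have hpush := aux_isFreeBasisOf_map e hS'basis
  have hmap : J'.map e.toMonoidHom = J := by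
    rw [hJ'def]
    exact Subgroup.map_comap_eq_self_of_surjective e.surjective J
  rw [hmap] at hpush
  refine ⟨⇑e '' S', hpush, ⟨FreeGroup.of ⟨u, hu⟩, hS'mem, he_of _⟩⟩

/-- Two free bases of the same subgroup are equinumerous. -/
theorem aux_basis_card {G : Type} [Group G] {S₀ S₁ : Set G} {H : Subgroup G}
    (h0 : IsFreeBasisOf S₀ H) (h1 : IsFreeBasisOf S₁ H) : Nonempty (↥S₀ ≃ ↥S₁) := by
  have e : FreeGroup ↥S₀ ≃* FreeGroup ↥S₁ := (auxBasisEquiv h0).trans (auxBasisEquiv h1).symm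
  have ab : Abelianization (FreeGroup ↥S₀) ≃* Abelianization (FreeGroup ↥S₁) :=
    e.abelianizationCongr
  have ab' : FreeAbelianGroup ↥S₀ ≃+ FreeAbelianGroup ↥S₁ := MulEquiv.toAdditive ab
  have fin : (↥S₀ →₀ ℤ) ≃+ (↥S₁ →₀ ℤ) :=
    ((FreeAbelianGroup.equivFinsupp ↥S₀).symm.trans ab').trans
      (FreeAbelianGroup.equivFinsupp ↥S₁)
  have hrank := fin.toIntLinearEquiv.rank_eq
  rw [rank_finsupp_self, rank_finsupp_self] at hrank
  simp only [Cardinal.lift_id] at hrank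
  exact Cardinal.eq.mp hrank

end Transport

section StdBasis

universe u

theorem aux_std_basis {α : Type u} (A : Set α) :
    IsFreeBasisOf (FreeGroup.of '' A) (Subgroup.closure (FreeGroup.of '' A)) := by
  constructor
  · set j : ↥A ≃ ↥(FreeGroup.of '' A) :=
      Equiv.Set.image _ A FreeGroup.of_injective with hjdef
    have hcomm : (FreeGroup.lift (fun t : ↥(FreeGroup.of '' A) => (t : FreeGroup α))).comp
        (FreeGroup.map ⇑j) = FreeGroup.map (Subtype.val : ↥A → α) := by
      apply FreeGroup.ext_hom; intro s
      simp [hjdef, Equiv.Set.image, Equiv.Set.imageOfInjOn]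
    apply aux_inj_of_comp (f := ⇑(FreeGroup.map ⇑j)) _ (aux_map_equiv_surjective j)
    have : ⇑(FreeGroup.lift (fun t : ↥(FreeGroup.of '' A) => (t : FreeGroup α))) ∘
        ⇑(FreeGroup.map ⇑j) = ⇑(FreeGroup.map (Subtype.val : ↥A → α)) := by
      rw [← hcomm]; rfl
    rw [this]
    exact aux_freeGroup_map_injective Subtype.val_injective
  · rw [FreeGroup.range_lift_eq_closure, Subtype.range_coe]

end StdBasis

section Graph

variable (Ω : MultiGraph) (v : Ω.V) (hconn : Ω.Connected)

def gReach : ℕ → Set Ω.V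
  | 0 => {v}
  | n + 1 => {u | ∃ u' ∈ gReach n, u = u' ∨ Ω.Adjacent u' u}

include hconn

lemma gReach_exists (u : Ω.V) : ∃ n, u ∈ gReach Ω v n := by
  have h := hconn.2 v u
  induction h with
  | refl => exact ⟨0, by rw [gReach]; exact rfl⟩
  | tail _ hbc ih =>
    obtain ⟨n, hn⟩ := ih
    exact ⟨n + 1, by rw [gReach]; exact ⟨_, hn, Or.inr hbc⟩⟩

noncomputable def gDpt (u : Ω.V) : ℕ := Nat.find (gReach_exists Ω v hconn u)

lemma gExists_parent (u : Ω.V) (h : u ≠ v) :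
    ∃ x : Ω.V × Fin Ω.k × Bool,
      gDpt Ω v hconn x.1 < gDpt Ω v hconn u ∧
      ((x.2.2 = true ∧ Ω.src x.2.1 = x.1 ∧ Ω.tgt x.2.1 = u) ∨
       (x.2.2 = false ∧ Ω.src x.2.1 = u ∧ Ω.tgt x.2.1 = x.1)) := by
  have hc : u ∈ gReach Ω v (gDpt Ω v hconn u) := Nat.find_spec (gReach_exists Ω v hconn u)
  rcases h0 : gDpt Ω v hconn u with _ | m
  · rw [h0, gReach] at hc
    exact absurd hc h
  · rw [h0, gReach] at hc
    obtain ⟨u', hu', hcase⟩ := hc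
    rcases hcase with rfl | hadj
    · have hm : m < gDpt Ω v hconn u := by omega
      exact absurd hu' (Nat.find_min _ hm)
    · obtain ⟨e, he⟩ := hadj
      have hlt : gDpt Ω v hconn u' < m + 1 := by
        have h1 : gDpt Ω v hconn u' ≤ m := Nat.find_le hu'
        omega
      rcases he with ⟨h1, h2⟩ | ⟨h1, h2⟩
      · exact ⟨(u', e, true), hlt, Or.inl ⟨rfl, h1, h2⟩⟩
      · exact ⟨(u', e, false), hlt, Or.inr ⟨rfl, h1, h2⟩⟩

noncomputable def gPar (u : Ω.V) (h : u ≠ v) : Ω.V :=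
  (gExists_parent Ω v hconn u h).choose.1

noncomputable def gPe (u : Ω.V) (h : u ≠ v) : Fin Ω.k :=
  (gExists_parent Ω v hconn u h).choose.2.1

noncomputable def gPb (u : Ω.V) (h : u ≠ v) : Bool :=
  (gExists_parent Ω v hconn u h).choose.2.2

lemma gP_spec (u : Ω.V) (h : u ≠ v) :
    gDpt Ω v hconn (gPar Ω v hconn u h) < gDpt Ω v hconn u ∧
      ((gPb Ω v hconn u h = true ∧ Ω.src (gPe Ω v hconn u h) = gPar Ω v hconn u h ∧
          Ω.tgt (gPe Ω v hconn u h) = u) ∨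
       (gPb Ω v hconn u h = false ∧ Ω.src (gPe Ω v hconn u h) = u ∧
          Ω.tgt (gPe Ω v hconn u h) = gPar Ω v hconn u h)) :=
  (gExists_parent Ω v hconn u h).choose_spec

noncomputable def gPeT : {u : Ω.V // u ≠ v} → Fin Ω.k :=
  fun u => gPe Ω v hconn u.1 u.2

lemma gPeT_inj : Function.Injective (gPeT Ω v hconn) := by
  rintro ⟨u, hu⟩ ⟨u', hu'⟩ h
  obtain ⟨hlt, hsp⟩ := gP_spec Ω v hconn u hu
  obtain ⟨hlt', hsp'⟩ := gP_spec Ω v hconn u' hu'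
  have h' : gPe Ω v hconn u hu = gPe Ω v hconn u' hu' := h
  apply Subtype.ext
  show u = u'
  rcases hsp with ⟨hb, h1, h2⟩ | ⟨hb, h1, h2⟩ <;>
    rcases hsp' with ⟨hb', h1', h2'⟩ | ⟨hb', h1', h2'⟩
  · rw [← h2, ← h2', h']
  · exfalso
    have e1 : u = gPar Ω v hconn u' hu' := by rw [← h2, h', h2']
    have e2 : u' = gPar Ω v hconn u hu := by rw [← h1', ← h', h1]
    rw [← e2] at hlt
    rw [← e1] at hlt'
    omega
  · exfalso
    have e1 : u' = gPar Ω v hconn u hu := by rw [← h2', ← h', h2]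
    have e2 : u = gPar Ω v hconn u' hu' := by rw [← h1, h', h1']
    rw [← e1] at hlt
    rw [← e2] at hlt'
    omega
  · rw [← h1, ← h1', h']

noncomputable def gP (u : Ω.V) : FreeGroup (Fin Ω.k) :=
  if h : u = v then 1
  else
    gP (gPar Ω v hconn u h) *
      (if gPb Ω v hconn u h then FreeGroup.of (gPe Ω v hconn u h)
       else (FreeGroup.of (gPe Ω v hconn u h))⁻¹)
termination_by gDpt Ω v hconn u
decreasing_by exact (gP_spec Ω v hconn u h).1

lemma gP_base : gP Ω v hconn v = 1 := by rw [gP]; simp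

lemma gP_step (u : Ω.V) (h : u ≠ v) :
    gP Ω v hconn u = gP Ω v hconn (gPar Ω v hconn u h) *
      (if gPb Ω v hconn u h then FreeGroup.of (gPe Ω v hconn u h)
       else (FreeGroup.of (gPe Ω v hconn u h))⁻¹) := by
  rw [gP]; simp [h]

noncomputable def gTheta : FreeGroup (Fin Ω.k) →* FreeGroup (Fin Ω.k) :=
  FreeGroup.lift fun e =>
    if e ∈ Set.range (gPeT Ω v hconn) then 1 else FreeGroup.of e

lemma gTheta_p (u : Ω.V) : gTheta Ω v hconn (gP Ω v hconn u) = 1 := by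
  suffices H : ∀ n (u : Ω.V), gDpt Ω v hconn u = n →
      gTheta Ω v hconn (gP Ω v hconn u) = 1 by exact H _ u rfl
  intro n
  induction n using Nat.strong_induction_on with
  | _ n ih =>
    intro u hn
    by_cases h : u = v
    · subst h; rw [gP_base, _root_.map_one]
    · rw [gP_step Ω v hconn u h, _root_.map_mul,
        ih (gDpt Ω v hconn (gPar Ω v hconn u h)) (hn ▸ (gP_spec Ω v hconn u h).1) _ rfl,
        one_mul]
      have hmem : gPe Ω v hconn u h ∈ Set.range (gPeT Ω v hconn) := ⟨⟨u, h⟩, rfl⟩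
      rcases hb : gPb Ω v hconn u h with _ | _
      · simp only [if_false, Bool.false_eq_true, _root_.map_inv]
        rw [gTheta]
        rw [FreeGroup.lift_apply_of, if_pos hmem, inv_one]
      · simp only [if_true]
        rw [gTheta]
        rw [FreeGroup.lift_apply_of, if_pos hmem]

noncomputable def gY (e : Fin Ω.k) : FreeGroup (Fin Ω.k) :=
  gP Ω v hconn (Ω.src e) * FreeGroup.of e * (gP Ω v hconn (Ω.tgt e))⁻¹

lemma gY_tree (e : Fin Ω.k) (he : e ∈ Set.range (gPeT Ω v hconn)) :
    gY Ω v hconn e = 1 := by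
  obtain ⟨⟨u, h⟩, rfl⟩ := he
  obtain ⟨hlt, hsp⟩ := gP_spec Ω v hconn u h
  have hu := gP_step Ω v hconn u h
  show gY Ω v hconn (gPe Ω v hconn u h) = 1
  rcases hsp with ⟨hb, h1, h2⟩ | ⟨hb, h1, h2⟩
  · rw [hb] at hu
    simp only [if_true] at hu
    rw [gY, h1, h2, hu]
    group
  · rw [hb] at hu
    simp only [Bool.false_eq_true, if_false] at hu
    rw [gY, h1, h2, hu]
    group

lemma gTheta_y (e : Fin Ω.k) (he : e ∉ Set.range (gPeT Ω v hconn)) :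
    gTheta Ω v hconn (gY Ω v hconn e) = FreeGroup.of e := by
  rw [gY, _root_.map_mul, _root_.map_mul, _root_.map_inv, gTheta_p, gTheta_p]
  rw [gTheta, FreeGroup.lift_apply_of, if_neg he]
  group

noncomputable def gPsi : FreeGroup (Fin Ω.k) →* FreeGroup (Fin Ω.k) :=
  FreeGroup.lift fun e =>
    if e ∈ Set.range (gPeT Ω v hconn) then FreeGroup.of e else gY Ω v hconn e

noncomputable def gPsi' : FreeGroup (Fin Ω.k) →* FreeGroup (Fin Ω.k) :=
  FreeGroup.lift fun e =>
    if e ∈ Set.range (gPeT Ω v hconn) then FreeGroup.of e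
    else (gP Ω v hconn (Ω.src e))⁻¹ * FreeGroup.of e * gP Ω v hconn (Ω.tgt e)

lemma gPsi_p (u : Ω.V) : gPsi Ω v hconn (gP Ω v hconn u) = gP Ω v hconn u := by
  suffices H : ∀ n (u : Ω.V), gDpt Ω v hconn u = n →
      gPsi Ω v hconn (gP Ω v hconn u) = gP Ω v hconn u by exact H _ u rfl
  intro n
  induction n using Nat.strong_induction_on with
  | _ n ih =>
    intro u hn
    by_cases h : u = v
    · subst h; rw [gP_base, _root_.map_one]
    · rw [gP_step Ω v hconn u h, _root_.map_mul,
        ih (gDpt Ω v hconn (gPar Ω v hconn u h)) (hn ▸ (gP_spec Ω v hconn u h).1) _ rfl]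
      congr 1
      have hmem : gPe Ω v hconn u h ∈ Set.range (gPeT Ω v hconn) := ⟨⟨u, h⟩, rfl⟩
      rcases hb : gPb Ω v hconn u h with _ | _ <;>
        simp only [if_true, Bool.false_eq_true, if_false, _root_.map_inv]
      · rw [gPsi, FreeGroup.lift_apply_of, if_pos hmem]
      · rw [gPsi, FreeGroup.lift_apply_of, if_pos hmem]

lemma gPsi'_p (u : Ω.V) : gPsi' Ω v hconn (gP Ω v hconn u) = gP Ω v hconn u := by
  suffices H : ∀ n (u : Ω.V), gDpt Ω v hconn u = n →
      gPsi' Ω v hconn (gP Ω v hconn u) = gP Ω v hconn u by exact H _ u rfl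
  intro n
  induction n using Nat.strong_induction_on with
  | _ n ih =>
    intro u hn
    by_cases h : u = v
    · subst h; rw [gP_base, _root_.map_one]
    · rw [gP_step Ω v hconn u h, _root_.map_mul,
        ih (gDpt Ω v hconn (gPar Ω v hconn u h)) (hn ▸ (gP_spec Ω v hconn u h).1) _ rfl]
      congr 1
      have hmem : gPe Ω v hconn u h ∈ Set.range (gPeT Ω v hconn) := ⟨⟨u, h⟩, rfl⟩
      rcases hb : gPb Ω v hconn u h with _ | _ <;>
        simp only [if_true, Bool.false_eq_true, if_false, _root_.map_inv]
      · rw [gPsi', FreeGroup.lift_apply_of, if_pos hmem]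
      · rw [gPsi', FreeGroup.lift_apply_of, if_pos hmem]

lemma gPsi'_psi : (gPsi' Ω v hconn).comp (gPsi Ω v hconn) = MonoidHom.id _ := by
  apply FreeGroup.ext_hom
  intro e
  simp only [MonoidHom.comp_apply, MonoidHom.id_apply]
  by_cases he : e ∈ Set.range (gPeT Ω v hconn)
  · rw [gPsi, FreeGroup.lift_apply_of, if_pos he, gPsi', FreeGroup.lift_apply_of, if_pos he]
  · rw [gPsi, FreeGroup.lift_apply_of, if_neg he, gY, _root_.map_mul, _root_.map_mul,
      _root_.map_inv, gPsi'_p, gPsi'_p]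
    rw [gPsi', FreeGroup.lift_apply_of, if_neg he]
    group

lemma gPsi_psi' : (gPsi Ω v hconn).comp (gPsi' Ω v hconn) = MonoidHom.id _ := by
  apply FreeGroup.ext_hom
  intro e
  simp only [MonoidHom.comp_apply, MonoidHom.id_apply]
  by_cases he : e ∈ Set.range (gPeT Ω v hconn)
  · rw [gPsi', FreeGroup.lift_apply_of, if_pos he, gPsi, FreeGroup.lift_apply_of, if_pos he]
  · rw [gPsi', FreeGroup.lift_apply_of, if_neg he, _root_.map_mul, _root_.map_mul,
      _root_.map_inv, gPsi_p, gPsi_p]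
    rw [gPsi, FreeGroup.lift_apply_of, if_neg he, gY]
    group

noncomputable def gPsiE : FreeGroup (Fin Ω.k) ≃* FreeGroup (Fin Ω.k) where
  toFun := ⇑(gPsi Ω v hconn)
  invFun := ⇑(gPsi' Ω v hconn)
  left_inv := fun x => by
    have := DFunLike.congr_fun (gPsi'_psi Ω v hconn) x
    simpa using this
  right_inv := fun x => by
    have := DFunLike.congr_fun (gPsi_psi' Ω v hconn) x
    simpa using this
  map_mul' := _root_.map_mul _

end Graph

section Assemble

variable (Ω : MultiGraph) (v : Ω.V) (hconn : Ω.Connected)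

/-- The free-factor subgroup of words of closed paths (image of the non-tree generators). -/
noncomputable def gH : Subgroup (FreeGroup (Fin Ω.k)) :=
  (Subgroup.closure (FreeGroup.of '' (Set.range (gPeT Ω v hconn))ᶜ)).map
    (gPsiE Ω v hconn).toMonoidHom

lemma gBasisH : IsFreeBasisOf
    (⇑(gPsiE Ω v hconn) '' (FreeGroup.of '' (Set.range (gPeT Ω v hconn))ᶜ))
    (gH Ω v hconn) :=
  aux_isFreeBasisOf_map _ (aux_std_basis _)

lemma gPsiE_of_tree (e : Fin Ω.k) (he : e ∈ Set.range (gPeT Ω v hconn)) :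
    gPsiE Ω v hconn (FreeGroup.of e) = FreeGroup.of e := by
  show gPsi Ω v hconn (FreeGroup.of e) = _
  rw [gPsi, FreeGroup.lift_apply_of, if_pos he]

lemma gPsiE_of_nontree (e : Fin Ω.k) (he : e ∉ Set.range (gPeT Ω v hconn)) :
    gPsiE Ω v hconn (FreeGroup.of e) = gY Ω v hconn e := by
  show gPsi Ω v hconn (FreeGroup.of e) = _
  rw [gPsi, FreeGroup.lift_apply_of, if_neg he]

lemma gY_mem_H (e : Fin Ω.k) : gY Ω v hconn e ∈ gH Ω v hconn := by
  by_cases he : e ∈ Set.range (gPeT Ω v hconn)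
  · rw [gY_tree Ω v hconn e he]
    exact one_mem _
  · exact ⟨FreeGroup.of e, Subgroup.subset_closure ⟨e, he, rfl⟩,
      gPsiE_of_nontree Ω v hconn e he⟩

lemma gPath_mem (l : List (Fin Ω.k × Bool)) :
    ∀ u₁ u₂ : Ω.V, Ω.IsPathFrom u₁ u₂ l →
      gP Ω v hconn u₁ * Ω.pathWord l * (gP Ω v hconn u₂)⁻¹ ∈ gH Ω v hconn := by
  induction l with
  | nil =>
    intro u₁ u₂ hp
    have h : u₁ = u₂ := hp
    subst h
    have h1 : Ω.pathWord [] = 1 := by rw [MultiGraph.pathWord]; simp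
    rw [h1]
    simpa using one_mem _
  | cons s l ih =>
    intro u₁ u₂ hp
    obtain ⟨h1, h2⟩ := hp
    have hw : Ω.pathWord (s :: l) = letter s * Ω.pathWord l := by
      rw [MultiGraph.pathWord, MultiGraph.pathWord, List.map_cons, List.prod_cons]
    have hsplit : gP Ω v hconn u₁ * Ω.pathWord (s :: l) * (gP Ω v hconn u₂)⁻¹
        = (gP Ω v hconn u₁ * letter s * (gP Ω v hconn (Ω.stepEnd s))⁻¹) *
          (gP Ω v hconn (Ω.stepEnd s) * Ω.pathWord l * (gP Ω v hconn u₂)⁻¹) := by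
      rw [hw]; group
    rw [hsplit]
    refine mul_mem ?_ (ih _ _ h2)
    rcases s with ⟨e, b⟩
    rcases b with _ | _
    · have hs : Ω.stepStart (e, false) = Ω.tgt e := rfl
      have he : Ω.stepEnd (e, false) = Ω.src e := rfl
      have hl : letter ((e : Fin Ω.k), false) = (FreeGroup.of e)⁻¹ := by
        rw [letter]; simp
      rw [← h1, hs, he, hl]
      have hY : gP Ω v hconn (Ω.tgt e) * (FreeGroup.of e)⁻¹ * (gP Ω v hconn (Ω.src e))⁻¹
          = (gY Ω v hconn e)⁻¹ := by rw [gY]; group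
      rw [hY]
      exact inv_mem (gY_mem_H Ω v hconn e)
    · have hs : Ω.stepStart (e, true) = Ω.src e := rfl
      have he : Ω.stepEnd (e, true) = Ω.tgt e := rfl
      have hl : letter ((e : Fin Ω.k), true) = FreeGroup.of e := by
        rw [letter]; simp
      rw [← h1, hs, he, hl]
      have hY : gP Ω v hconn (Ω.src e) * FreeGroup.of e * (gP Ω v hconn (Ω.tgt e))⁻¹
          = gY Ω v hconn e := rfl
      rw [hY]
      exact gY_mem_H Ω v hconn e

lemma gCard : ((Set.range (gPeT Ω v hconn))ᶜ : Set (Fin Ω.k)).encard ≤ (Ω.rk : ℕ∞) := by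
  have hfin : ((Set.range (gPeT Ω v hconn))ᶜ : Set (Fin Ω.k)).Finite := Set.toFinite _
  rw [← hfin.cast_ncard_eq]
  have h1 : (Set.range (gPeT Ω v hconn)).ncard
      + ((Set.range (gPeT Ω v hconn))ᶜ : Set (Fin Ω.k)).ncard = Ω.k := by
    rw [Set.ncard_add_ncard_compl, Nat.card_eq_fintype_card, Fintype.card_fin]
  have h2 : (Set.range (gPeT Ω v hconn)).ncard = Fintype.card Ω.V - 1 := by
    rw [← Nat.card_coe_set_eq, Nat.card_range_of_injective (gPeT_inj Ω v hconn),
      Nat.card_eq_fintype_card]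
    rw [Fintype.card_subtype_compl, Fintype.card_subtype_eq]
  have h3 : 1 ≤ Fintype.card Ω.V := Fintype.card_pos_iff.mpr ⟨v⟩
  have h4 : ((Set.range (gPeT Ω v hconn))ᶜ : Set (Fin Ω.k)).ncard ≤ Ω.rk := by
    rw [MultiGraph.rk]; omega
  exact Nat.cast_le.mpr h4

end Assemble

/-- Let `Ω` be a finite connected graph with `k` oriented labeled edges.
Then for every closed path `w` in `Ω`, the primitivity rank of the corresponding element of
`F_k` satisfies `π(w) ∈ {0,1,…,rk(Ω)} ∪ {∞}`, where `rk(Ω) = |E(Ω)| − |V(Ω)| + 1`. -/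
theorem stmt_11 (Ω : MultiGraph) (hconn : Ω.Connected)
    (v : Ω.V) (l : List (Fin Ω.k × Bool)) (hl : Ω.IsPathFrom v v l) :
    primRank (Ω.pathWord l) = ⊤ ∨ primRank (Ω.pathWord l) ≤ (Ω.rk : ℕ∞) := by
  classical
  set w := Ω.pathWord l with hwdef
  set SA : Set (FreeGroup (Fin Ω.k)) :=
    FreeGroup.of '' (Set.range (gPeT Ω v hconn))ᶜ with hSA
  set S₀ := ⇑(gPsiE Ω v hconn) '' SA with hS0
  have basisH : IsFreeBasisOf S₀ (gH Ω v hconn) := gBasisH Ω v hconn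
  have hwH : w ∈ gH Ω v hconn := by
    have h := gPath_mem Ω v hconn l v v hl
    rwa [gP_base, one_mul, inv_one, mul_one] at h
  have basisU := aux_std_basis (Set.univ : Set (Fin Ω.k))
  rw [Set.image_univ, FreeGroup.closure_range_of] at basisU
  have basisTop0 : IsFreeBasisOf
      (⇑(gPsiE Ω v hconn) '' Set.range (FreeGroup.of : Fin Ω.k → _)) ⊤ := by
    have h := aux_isFreeBasisOf_map (gPsiE Ω v hconn) basisU
    rwa [Subgroup.map_top_of_surjective (gPsiE Ω v hconn).toMonoidHom (gPsiE Ω v hconn).surjective] at h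
  set X : Set (FreeGroup (Fin Ω.k)) :=
    FreeGroup.of '' Set.range (gPeT Ω v hconn) with hX
  have himg : ⇑(gPsiE Ω v hconn) '' Set.range (FreeGroup.of : Fin Ω.k → _) = S₀ ∪ X := by
    have h1 : Set.range (FreeGroup.of : Fin Ω.k → _) = SA ∪ FreeGroup.of '' Set.range (gPeT Ω v hconn) := by
      rw [hSA, ← Set.image_union, Set.compl_union_self, Set.image_univ]
    rw [h1, Set.image_union, hS0, hX]
    congr 1
    apply Set.Subset.antisymm
    · rintro _ ⟨_, ⟨e, he, rfl⟩, rfl⟩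
      rw [gPsiE_of_tree Ω v hconn e he]
      exact ⟨e, he, rfl⟩
    · rintro _ ⟨e, he, rfl⟩
      exact ⟨FreeGroup.of e, ⟨e, he, rfl⟩, gPsiE_of_tree Ω v hconn e he⟩
  rw [himg] at basisTop0
  have hencard : S₀.encard ≤ (Ω.rk : ℕ∞) := by
    rw [hS0, hSA, (gPsiE Ω v hconn).injective.encard_image,
      FreeGroup.of_injective.encard_image]
    exact gCard Ω v hconn
  by_cases hprim : IsPrimitiveIn w (gH Ω v hconn)
  · left
    obtain ⟨S₁, basis1, hw1⟩ := hprim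
    obtain ⟨eqv⟩ := aux_basis_card basisH basis1
    have hS0H : ∀ s, s ∈ S₀ → s ∈ gH Ω v hconn := by
      intro s hs
      exact (aux_isFreeBasisOf_closure basisH) ▸ Subgroup.subset_closure hs
    set μ : ↥(gH Ω v hconn) ≃* ↥(gH Ω v hconn) :=
      (auxBasisEquiv basisH).symm.trans
        ((FreeGroup.freeGroupCongr eqv).trans (auxBasisEquiv basis1)) with hμdef
    have hμs : ∀ s : ↥S₀,
        ((μ ⟨(s : FreeGroup (Fin Ω.k)), hS0H _ s.2⟩ : ↥(gH Ω v hconn)) : FreeGroup (Fin Ω.k))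
          = ((eqv s : ↥S₁) : FreeGroup (Fin Ω.k)) := by
      intro s
      have h1 : auxBasisEquiv basisH (FreeGroup.of s)
          = ⟨(s : FreeGroup (Fin Ω.k)), hS0H _ s.2⟩ :=
        Subtype.ext (auxBasisEquiv_of basisH s)
      have h2 : (auxBasisEquiv basisH).symm ⟨(s : FreeGroup (Fin Ω.k)), hS0H _ s.2⟩
          = FreeGroup.of s := by
        rw [← h1, MulEquiv.symm_apply_apply]
      rw [hμdef]
      simp only [MulEquiv.trans_apply]
      rw [h2]
      have h3 : FreeGroup.freeGroupCongr eqv (FreeGroup.of s) = FreeGroup.of (eqv s) := by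
        rw [FreeGroup.freeGroupCongr_apply]
        exact FreeGroup.map.of
      rw [h3]
      exact auxBasisEquiv_of basis1 (eqv s)
    have hdisj : ∀ x ∈ X, x ∉ S₀ := by
      rintro _ ⟨e, he, rfl⟩ hx
      obtain ⟨_, ⟨e', he', rfl⟩, hx2⟩ := hx
      rw [gPsiE_of_nontree Ω v hconn e' he'] at hx2
      have t1 : gTheta Ω v hconn (gY Ω v hconn e') = FreeGroup.of e' :=
        gTheta_y Ω v hconn e' he'
      rw [hx2] at t1
      have t2 : gTheta Ω v hconn (FreeGroup.of e) = 1 := by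
        rw [gTheta, FreeGroup.lift_apply_of, if_pos he]
      rw [t2] at t1
      exact FreeGroup.of_ne_one e' t1.symm
    set U := S₀ ∪ X with hU
    have hclosU : Subgroup.closure U = ⊤ := aux_isFreeBasisOf_closure basisTop0
    have hsurjU : Function.Surjective
        ⇑(FreeGroup.lift (fun b : ↥U => (b : FreeGroup (Fin Ω.k)))) := by
      intro x
      have h : x ∈ (FreeGroup.lift (fun b : ↥U => (b : FreeGroup (Fin Ω.k)))).range := by
        rw [basisTop0.2]; trivial
      exact h
    set Λ : FreeGroup ↥U ≃* FreeGroup (Fin Ω.k) :=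
      MulEquiv.ofBijective _ ⟨basisTop0.1, hsurjU⟩ with hΛdef
    have hΛof : ∀ b : ↥U, Λ (FreeGroup.of b) = (b : FreeGroup (Fin Ω.k)) := fun b => by
      rw [hΛdef]
      exact FreeGroup.lift_apply_of
    set ξ : ↥U → FreeGroup (Fin Ω.k) := fun b =>
      if hb : (b : FreeGroup (Fin Ω.k)) ∈ S₀
      then ((μ ⟨b, hS0H _ hb⟩ : ↥(gH Ω v hconn)) : FreeGroup (Fin Ω.k))
      else (b : FreeGroup (Fin Ω.k)) with hξdef
    set ξ' : ↥U → FreeGroup (Fin Ω.k) := fun b =>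
      if hb : (b : FreeGroup (Fin Ω.k)) ∈ S₀
      then ((μ.symm ⟨b, hS0H _ hb⟩ : ↥(gH Ω v hconn)) : FreeGroup (Fin Ω.k))
      else (b : FreeGroup (Fin Ω.k)) with hξ'def
    set Ξ : FreeGroup (Fin Ω.k) →* FreeGroup (Fin Ω.k) :=
      (FreeGroup.lift ξ).comp Λ.symm.toMonoidHom with hΞdef
    set Ξ' : FreeGroup (Fin Ω.k) →* FreeGroup (Fin Ω.k) :=
      (FreeGroup.lift ξ').comp Λ.symm.toMonoidHom with hΞ'def
    have hsymm : ∀ b : ↥U, Λ.symm (b : FreeGroup (Fin Ω.k)) = FreeGroup.of b := by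
      intro b
      rw [MulEquiv.symm_apply_eq, hΛof]
    have hΞb : ∀ b : ↥U, Ξ (b : FreeGroup (Fin Ω.k)) = ξ b := by
      intro b
      rw [hΞdef]
      simp only [MonoidHom.comp_apply, MulEquiv.coe_toMonoidHom]
      rw [hsymm b, FreeGroup.lift_apply_of]
    have hΞ'b : ∀ b : ↥U, Ξ' (b : FreeGroup (Fin Ω.k)) = ξ' b := by
      intro b
      rw [hΞ'def]
      simp only [MonoidHom.comp_apply, MulEquiv.coe_toMonoidHom]
      rw [hsymm b, FreeGroup.lift_apply_of]
    have hclS : Subgroup.closure S₀ = gH Ω v hconn := aux_isFreeBasisOf_closure basisH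
    have hΞH : ∀ (x : FreeGroup (Fin Ω.k)) (hx : x ∈ gH Ω v hconn),
        Ξ x = ((μ ⟨x, hx⟩ : ↥(gH Ω v hconn)) : FreeGroup (Fin Ω.k)) := by
      have key : ∀ (x : FreeGroup (Fin Ω.k)) (hx : x ∈ Subgroup.closure S₀),
          Ξ x = ((μ ⟨x, hclS ▸ hx⟩ : ↥(gH Ω v hconn)) : FreeGroup (Fin Ω.k)) := by
        intro x hx
        induction hx using Subgroup.closure_induction with
        | mem s hs =>
          rw [hΞb ⟨s, Or.inl hs⟩, hξdef]
          simp only []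
          rw [dif_pos hs]
        | one =>
          rw [_root_.map_one]
          have h : (⟨(1 : FreeGroup (Fin Ω.k)), hclS ▸ one_mem _⟩ : ↥(gH Ω v hconn)) = 1 :=
            rfl
          rw [h, _root_.map_one, OneMemClass.coe_one]
        | mul x y hx hy ihx ihy =>
          rw [_root_.map_mul, ihx, ihy]
          have h : (⟨x * y, hclS ▸ mul_mem hx hy⟩ : ↥(gH Ω v hconn))
              = ⟨x, hclS ▸ hx⟩ * ⟨y, hclS ▸ hy⟩ := rfl
          rw [h, _root_.map_mul, MulMemClass.coe_mul]
        | inv x hx ihx =>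
          rw [_root_.map_inv, ihx]
          have h : (⟨x⁻¹, hclS ▸ inv_mem hx⟩ : ↥(gH Ω v hconn)) = (⟨x, hclS ▸ hx⟩)⁻¹ := rfl
          rw [h, _root_.map_inv, InvMemClass.coe_inv]
      intro x hx
      exact key x (hclS ▸ hx)
    have hΞ'H : ∀ (x : FreeGroup (Fin Ω.k)) (hx : x ∈ gH Ω v hconn),
        Ξ' x = ((μ.symm ⟨x, hx⟩ : ↥(gH Ω v hconn)) : FreeGroup (Fin Ω.k)) := by
      have key : ∀ (x : FreeGroup (Fin Ω.k)) (hx : x ∈ Subgroup.closure S₀),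
          Ξ' x = ((μ.symm ⟨x, hclS ▸ hx⟩ : ↥(gH Ω v hconn)) : FreeGroup (Fin Ω.k)) := by
        intro x hx
        induction hx using Subgroup.closure_induction with
        | mem s hs =>
          rw [hΞ'b ⟨s, Or.inl hs⟩, hξ'def]
          simp only []
          rw [dif_pos hs]
        | one =>
          rw [_root_.map_one]
          have h : (⟨(1 : FreeGroup (Fin Ω.k)), hclS ▸ one_mem _⟩ : ↥(gH Ω v hconn)) = 1 :=
            rfl
          rw [h, _root_.map_one, OneMemClass.coe_one]
        | mul x y hx hy ihx ihy =>
          rw [_root_.map_mul, ihx, ihy]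
          have h : (⟨x * y, hclS ▸ mul_mem hx hy⟩ : ↥(gH Ω v hconn))
              = ⟨x, hclS ▸ hx⟩ * ⟨y, hclS ▸ hy⟩ := rfl
          rw [h, _root_.map_mul, MulMemClass.coe_mul]
        | inv x hx ihx =>
          rw [_root_.map_inv, ihx]
          have h : (⟨x⁻¹, hclS ▸ inv_mem hx⟩ : ↥(gH Ω v hconn)) = (⟨x, hclS ▸ hx⟩)⁻¹ := rfl
          rw [h, _root_.map_inv, InvMemClass.coe_inv]
      intro x hx
      exact key x (hclS ▸ hx)
    have c1 : Ξ'.comp Ξ = MonoidHom.id (FreeGroup (Fin Ω.k)) := by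
      apply MonoidHom.eq_of_eqOn_dense hclosU
      rintro b hb
      rcases hb with hb | hb
      · show Ξ' (Ξ b) = b
        rw [hΞb ⟨b, Or.inl hb⟩, hξdef]
        simp only []
        rw [dif_pos hb, hΞ'H _ (μ ⟨b, hS0H _ hb⟩).2, Subtype.coe_eta,
          MulEquiv.symm_apply_apply]
      · show Ξ' (Ξ b) = b
        rw [hΞb ⟨b, Or.inr hb⟩, hξdef]
        simp only []
        rw [dif_neg (hdisj b hb), hΞ'b ⟨b, Or.inr hb⟩, hξ'def]
        simp only []
        rw [dif_neg (hdisj b hb)]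
    have c2 : Ξ.comp Ξ' = MonoidHom.id (FreeGroup (Fin Ω.k)) := by
      apply MonoidHom.eq_of_eqOn_dense hclosU
      rintro b hb
      rcases hb with hb | hb
      · show Ξ (Ξ' b) = b
        rw [hΞ'b ⟨b, Or.inl hb⟩, hξ'def]
        simp only []
        rw [dif_pos hb, hΞH _ (μ.symm ⟨b, hS0H _ hb⟩).2, Subtype.coe_eta,
          MulEquiv.apply_symm_apply]
      · show Ξ (Ξ' b) = b
        rw [hΞ'b ⟨b, Or.inr hb⟩, hξ'def]
        simp only []
        rw [dif_neg (hdisj b hb), hΞb ⟨b, Or.inr hb⟩, hξdef]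
        simp only []
        rw [dif_neg (hdisj b hb)]
    set ΞE : FreeGroup (Fin Ω.k) ≃* FreeGroup (Fin Ω.k) :=
      { toFun := ⇑Ξ
        invFun := ⇑Ξ'
        left_inv := fun x => by
          have h := DFunLike.congr_fun c1 x
          simpa using h
        right_inv := fun x => by
          have h := DFunLike.congr_fun c2 x
          simpa using h
        map_mul' := _root_.map_mul Ξ } with hΞEdef
    have basisT := aux_isFreeBasisOf_map ΞE basisTop0
    rw [Subgroup.map_top_of_surjective ΞE.toMonoidHom ΞE.surjective] at basisT
    set s0 : ↥S₀ := eqv.symm ⟨w, hw1⟩ with hs0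
    have hwT : w ∈ ⇑ΞE '' U := by
      refine ⟨(s0 : FreeGroup (Fin Ω.k)), Or.inl s0.2, ?_⟩
      show Ξ (s0 : FreeGroup (Fin Ω.k)) = w
      rw [hΞH _ (hS0H _ s0.2), hμs s0, hs0, Equiv.apply_symm_apply]
    have hall := aux_prim_everywhere basisT hwT
    have htop : (⊤ : ℕ∞) ≤ primRank w := by
      show (⊤ : ℕ∞) ≤ ⨅ J ∈ {J : Subgroup (FreeGroup (Fin Ω.k)) |
        w ∈ J ∧ ¬IsPrimitiveIn w J}, subgroupRank J
      refine le_iInf₂ fun Jx hJx => ?_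
      exact (hJx.2 (hall Jx hJx.1)).elim
    exact le_antisymm le_top htop
  · right
    have h1 : primRank w ≤ subgroupRank (gH Ω v hconn) := by
      show (⨅ J ∈ {J : Subgroup (FreeGroup (Fin Ω.k)) |
        w ∈ J ∧ ¬IsPrimitiveIn w J}, subgroupRank J) ≤ _
      exact iInf₂_le (gH Ω v hconn) ⟨hwH, hprim⟩
    have h2 : subgroupRank (gH Ω v hconn) ≤ S₀.encard := by
      show (⨅ S ∈ {S : Set (FreeGroup (Fin Ω.k)) |
        IsFreeBasisOf S (gH Ω v hconn)}, S.encard) ≤ _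
      exact iInf₂_le S₀ basisH
    exact le_trans h1 (le_trans h2 hencard)


end Paper
end
end
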